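/- arXiv:math/0405333 — 3 statements merged into one kernel-verified Lean document; each statement's English description precedes it below -/
import Mathlib

section
/- For w in a Weyl group W with elements T_w (reduced-word products of the idempotent generators T_i) and ε_w (reduced-word products of ε_i = 1 − T_i) in the nil-Hecke algebra, one has ε_w = Σ_{v ≤ w} (−1)^{ℓ(v)} T_v and T_w = Σ_{v ≤ w} (−1)^{ℓ(v)} ε_v, where ≤ is the Bruhat order and ℓ is the length function. -/
open scoped Classical TensorProduct

noncomputable section

/-- Alternating product `a * b * a * ⋯` with `m` factors. -/
def altProd {A : Type*} [Monoid A] : A → A → ℕ → A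
  | _, _, 0 => 1
  | a, b, (k+1) => a * altProd b a k

/-- Alternating composition `g ∘ h ∘ g ∘ ⋯` with `m` factors. -/
def altComp {α : Type*} : (α → α) → (α → α) → ℕ → α → α
  | _, _, 0 => id
  | g, h, (k+1) => g ∘ altComp h g k

/-- Bruhat-Chevalley order on a Coxeter group, via the subword characterization. -/
def BruhatLE {B W : Type*} [Group W] {M : CoxeterMatrix B} (cs : CoxeterSystem M W)
    (v w : W) : Prop :=
  ∃ l : List B, cs.IsReduced l ∧ cs.wordProd l = w ∧
    ∃ l' : List B, l'.Sublist l ∧ cs.wordProd l' = v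

/-- Strict Bruhat-Chevalley order. -/
def BruhatLT {B W : Type*} [Group W] {M : CoxeterMatrix B} (cs : CoxeterSystem M W)
    (v w : W) : Prop :=
  BruhatLE cs v w ∧ v ≠ w

namespace NilHeckeProof

variable {B W : Type*} [Group W] {M : CoxeterMatrix B} (cs : CoxeterSystem M W)

local prefix:100 "s" => cs.simple
local prefix:100 "π" => cs.wordProd
local prefix:100 "ℓ" => cs.length

/-- sign helper -/
def sgn (t x : W) : ℤˣ := if t = x then -1 else 1

lemma sgn_conj (a t x : W) : sgn (a * t * a⁻¹) x = sgn t (a⁻¹ * x * a) := by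
  unfold sgn
  congr 1
  simp only [eq_iff_iff]
  constructor
  · intro h; rw [← h]; group
  · intro h; rw [h]; group

/-- the basic involution -/
def sigmaFun (i : B) : W × ℤˣ → W × ℤˣ :=
  fun p => (s i * p.1 * (s i)⁻¹, p.2 * sgn p.1 (s i))

lemma sigmaFun_invol (i : B) : Function.Involutive (sigmaFun cs i) := by
  intro p
  obtain ⟨t, e⟩ := p
  unfold sigmaFun
  simp only [Prod.mk.injEq]
  constructor
  · simp [cs.inv_simple, mul_assoc, cs.simple_mul_simple_cancel_left, cs.simple_mul_simple_self]
  · rw [mul_assoc, sgn_conj]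
    have h : (s i)⁻¹ * s i * s i = s i := by group
    rw [h]
    unfold sgn
    split <;> simp

def sigma (i : B) : Equiv.Perm (W × ℤˣ) := (sigmaFun_invol cs i).toPerm

lemma sigma_apply (i : B) (t : W) (e : ℤˣ) :
    sigma cs i (t, e) = (s i * t * (s i)⁻¹, e * sgn t (s i)) := rfl

lemma zeta_comm (i j : B) : s j * (s j * s i)⁻¹ = (s j * s i) * s j := by
  rw [mul_inv_rev, cs.inv_simple, cs.inv_simple, ← mul_assoc]

private lemma conj_pow_succ (ζ t : W) (k : ℕ) :
    (ζ ^ k)⁻¹ * (ζ⁻¹ * t * ζ) * ζ ^ k = (ζ ^ (k+1))⁻¹ * t * ζ ^ (k+1) := by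
  rw [pow_succ]
  group

private lemma conj_shift {G : Type*} [Group G] (ζ a : G) (h : a * ζ⁻¹ = ζ * a) (r : ℕ) :
    ζ * (ζ ^ r * a) * ζ⁻¹ = ζ ^ (r + 2) * a := by
  calc ζ * (ζ ^ r * a) * ζ⁻¹ = ζ ^ (r+1) * (a * ζ⁻¹) := by rw [pow_succ']; group
    _ = ζ ^ (r+1) * (ζ * a) := by rw [h]
    _ = ζ ^ (r + 2) * a := by rw [pow_succ]; group

lemma pow_formula (i j : B) (k : ℕ) (t : W) (e : ℤˣ) :
    ((sigma cs i * sigma cs j) ^ k) (t, e) =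
      (((s j * s i) ^ k)⁻¹ * t * (s j * s i) ^ k,
        e * ∏ r ∈ Finset.range (2 * k), sgn t ((s j * s i) ^ r * s j)) := by
  induction k generalizing t e with
  | zero => simp
  | succ k ih =>
    have hg : (sigma cs i * sigma cs j) (t, e) =
        ((s j * s i)⁻¹ * t * (s j * s i),
          e * (sgn t ((s j * s i) ^ 0 * s j) * sgn t ((s j * s i) ^ 1 * s j))) := by
      rw [Equiv.Perm.mul_apply, sigma_apply, sigma_apply]
      congr 1
      · rw [mul_inv_rev, cs.inv_simple, cs.inv_simple]
        group
      · rw [pow_zero, one_mul, pow_one, mul_assoc]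
        congr 1
        rw [sgn_conj]
        congr 1
        rw [cs.inv_simple]
    rw [pow_succ, Equiv.Perm.mul_apply, hg, ih]
    simp only [Prod.mk.injEq]
    have hshift : ∀ r : ℕ,
        sgn ((s j * s i)⁻¹ * t * (s j * s i)) ((s j * s i) ^ r * s j)
          = sgn t ((s j * s i) ^ (r + 2) * s j) := by
      intro r
      have h1 : (s j * s i)⁻¹ * t * (s j * s i) = (s j * s i)⁻¹ * t * ((s j * s i)⁻¹)⁻¹ := by
        group
      rw [h1, sgn_conj]
      congr 1
      rw [inv_inv]
      exact conj_shift _ _ (zeta_comm cs i j) r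
    constructor
    · exact conj_pow_succ _ _ _
    · rw [show 2 * (k + 1) = 2 * k + 1 + 1 by ring]
      rw [Finset.prod_range_succ', Finset.prod_range_succ']
      simp only [hshift]
      have hc : ∀ r ∈ Finset.range (2 * k),
          sgn t ((s j * s i) ^ (r + 1 + 1) * s j) = sgn t ((s j * s i) ^ (r + 2) * s j) := by
        intro r _; norm_num
      rw [Finset.prod_congr rfl hc]
      simp only [mul_comm, mul_left_comm, mul_assoc]

lemma liftable : CoxeterMatrix.IsLiftable M (sigma cs) := by
  intro i j
  rcases Nat.eq_zero_or_pos (M i j) with h0 | _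
  · rw [h0, pow_zero]
  · refine Equiv.ext fun p => ?_
    obtain ⟨t, e⟩ := p
    show _ = (t, e)
    rw [pow_formula]
    have hζm : (s j * s i) ^ M.M i j = 1 := cs.simple_mul_simple_pow' i j
    have hsign : ∏ r ∈ Finset.range (2 * M.M i j), sgn t ((s j * s i) ^ r * s j) = 1 := by
      rw [two_mul, Finset.prod_range_add]
      have h2 : ∀ x : ℕ, (s j * s i) ^ (M.M i j + x) = (s j * s i) ^ x := by
        intro x; rw [pow_add, hζm, one_mul]
      simp only [h2]
      exact Int.units_mul_self _
    rw [hζm, hsign]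
    simp

/-- The sign homomorphism into permutations of `W × ℤˣ`. -/
def P : W →* Equiv.Perm (W × ℤˣ) := cs.lift ⟨sigma cs, liftable cs⟩

lemma P_simple (i : B) : P cs (s i) = sigma cs i := cs.lift_apply_simple (liftable cs) i

/-- η w t = the sign of (t, 1) under P w. -/
def eta (w t : W) : ℤˣ := (P cs w (t, 1)).2

lemma P_apply (w t : W) (e : ℤˣ) : P cs w (t, e) = (w * t * w⁻¹, e * eta cs w t) := by
  induction w using cs.simple_induction_left generalizing t e with
  | one => unfold eta; simp
  | mul_simple_left w i ih =>
    unfold eta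
    rw [map_mul, Equiv.Perm.mul_apply, Equiv.Perm.mul_apply, ih, ih, P_simple,
      sigma_apply, sigma_apply]
    simp only [Prod.mk.injEq]
    constructor
    · group
    · simp [mul_assoc]

lemma eta_cocycle (w₁ w₂ t : W) :
    eta cs (w₁ * w₂) t = eta cs w₂ t * eta cs w₁ (w₂ * t * w₂⁻¹) := by
  have h := P_apply cs (w₁ * w₂) t 1
  rw [map_mul, Equiv.Perm.mul_apply, P_apply, P_apply] at h
  have h2 := congrArg Prod.snd h
  simp only at h2
  simpa using h2.symm

lemma eta_one (t : W) : eta cs 1 t = 1 := by unfold eta; simp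

lemma eta_simple (i : B) (t : W) : eta cs (s i) t = sgn t (s i) := by
  unfold eta
  rw [P_simple, sigma_apply]
  simp

/-- counting formula -/
lemma eta_eq_count (ω : List B) (t : W) :
    eta cs (π ω) t = (-1 : ℤˣ) ^ ((cs.rightInvSeq ω).count t) := by
  induction ω with
  | nil => simp [eta_one]
  | cons i ω ih =>
    rw [cs.wordProd_cons, eta_cocycle, ih, eta_simple]
    have hris : cs.rightInvSeq (i :: ω) = ((π ω)⁻¹ * (s i) * (π ω)) :: cs.rightInvSeq ω := rfl
    rw [hris, List.count_cons]
    simp only [beq_iff_eq]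
    unfold sgn
    have hiff : (π ω * t * (π ω)⁻¹ = s i) ↔ (t = (π ω)⁻¹ * s i * π ω) := by
      constructor
      · intro h; rw [← h]; group
      · intro h; rw [h]; group
    by_cases h : t = (π ω)⁻¹ * s i * π ω
    · rw [if_pos (hiff.mpr h), if_pos h.symm, pow_succ]
    · rw [if_neg (fun hc => h (hiff.mp hc)), if_neg (fun hc => h hc.symm), add_zero, mul_one]

lemma eta_reflection_self {t : W} (ht : cs.IsReflection t) : eta cs t t = -1 := by
  obtain ⟨x, i, rfl⟩ := ht
  have h1 : eta cs (x * s i * x⁻¹) (x * s i * x⁻¹)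
      = eta cs x⁻¹ (x * s i * x⁻¹) * eta cs (x * s i) (x⁻¹ * (x * s i * x⁻¹) * (x⁻¹)⁻¹) := by
    rw [← eta_cocycle]
  have h2 : x⁻¹ * (x * s i * x⁻¹) * (x⁻¹)⁻¹ = s i := by group
  rw [h2] at h1
  have h3 : eta cs (x * s i) (s i) = eta cs (s i) (s i) * eta cs x (s i * s i * (s i)⁻¹) := by
    rw [← eta_cocycle]
  rw [show s i * (s i) * (s i)⁻¹ = s i by group] at h3
  have h4 : eta cs x⁻¹ (x * s i * x⁻¹) = (eta cs x (s i))⁻¹ := by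
    have h5 : (1 : ℤˣ) = eta cs x (s i) * eta cs x⁻¹ (x * s i * x⁻¹) := by
      have := eta_cocycle cs x⁻¹ x (s i)
      rw [inv_mul_cancel, eta_one] at this
      exact this
    have h6 := mul_eq_one_iff_inv_eq.mp h5.symm
    rw [← h6]
  rw [h1, h3, h4, eta_simple]
  unfold sgn
  rw [if_pos rfl]
  generalize eta cs x (s i) = u
  have : u⁻¹ * (u * -1) = -1 := by group
  calc u⁻¹ * (-1 * u) = u⁻¹ * (u * -1) := by rw [mul_comm (-1 : ℤˣ) u]
    _ = -1 := this

/-- If `η w t = -1` then `t` is in the right inversion sequence of any word for `w`. -/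
lemma mem_ris_of_eta {ω : List B} {t : W} (h : eta cs (π ω) t = -1) :
    t ∈ cs.rightInvSeq ω := by
  rw [eta_eq_count] at h
  by_contra hc
  rw [List.count_eq_zero_of_not_mem hc] at h
  simp at h

lemma length_mul_lt_of_eta {w t : W} (h : eta cs w t = -1) : ℓ (w * t) < ℓ w := by
  obtain ⟨ω, hlen, hw⟩ : ∃ ω : List B, ω.length = cs.length w ∧ w = cs.wordProd ω := by
    obtain ⟨q, hq1, hq2⟩ := cs.exists_isReduced w; exact ⟨q, by rw [hq2]; exact hq1.symm, hq2⟩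
  have hred : cs.IsReduced ω := by unfold CoxeterSystem.IsReduced; rw [← hw, hlen]
  subst hw
  have hmem := mem_ris_of_eta cs h
  exact (cs.isRightInversion_of_mem_rightInvSeq hred hmem).2

lemma eta_of_inversion {w t : W} (ht : cs.IsReflection t) (h : ℓ (w * t) < ℓ w) :
    eta cs w t = -1 := by
  set u := w * t with hu
  have hw : w = u * t := by rw [hu, mul_assoc, ht.mul_self, mul_one]
  have hut : ¬ (ℓ (u * t) < ℓ u) := by rw [← hw]; omega
  have h1 : eta cs u t = 1 := by
    rcases Int.units_eq_one_or (eta cs u t) with h' | h'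
    · exact h'
    · exact absurd (length_mul_lt_of_eta cs h') hut
  rw [hw, eta_cocycle]
  rw [show t * t * t⁻¹ = t by rw [ht.mul_self, one_mul, ht.inv]]
  rw [h1, eta_reflection_self cs ht]
  simp

/-- Strong exchange property, right version, for arbitrary words. -/
theorem strong_exchange_right {ω : List B} {t : W} (ht : cs.IsReflection t)
    (h : ℓ (π ω * t) < ℓ (π ω)) :
    ∃ j < ω.length, π (ω.eraseIdx j) = π ω * t := by
  have hmem : t ∈ cs.rightInvSeq ω := mem_ris_of_eta cs (eta_of_inversion cs ht h)
  obtain ⟨j, hj, hjt⟩ := List.mem_iff_getElem.mp hmem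
  refine ⟨j, by simpa using hj, ?_⟩
  rw [← hjt, ← List.getD_eq_getElem _ 1 hj, cs.wordProd_mul_getD_rightInvSeq]

/-- Strong exchange property, left version, for arbitrary words. -/
theorem strong_exchange_left {ω : List B} {t : W} (ht : cs.IsReflection t)
    (h : ℓ (t * π ω) < ℓ (π ω)) :
    ∃ j < ω.length, π (ω.eraseIdx j) = t * π ω := by
  have h2 : ℓ (π ω.reverse * t) < ℓ (π ω.reverse) := by
    rw [cs.wordProd_reverse]
    have e1 : (π ω)⁻¹ * t = (t * π ω)⁻¹ := by rw [mul_inv_rev, ht.inv]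
    rw [e1, cs.length_inv, cs.length_inv]
    exact h
  have hmem : t ∈ cs.rightInvSeq ω.reverse := mem_ris_of_eta cs (eta_of_inversion cs ht h2)
  rw [cs.rightInvSeq_reverse, List.mem_reverse] at hmem
  obtain ⟨j, hj, hjt⟩ := List.mem_iff_getElem.mp hmem
  refine ⟨j, by simpa using hj, ?_⟩
  rw [← hjt, ← List.getD_eq_getElem _ 1 hj, cs.getD_leftInvSeq_mul_wordProd]


/-! ### Reduced subword extraction -/

private lemma exists_reduced_sublist_aux : ∀ (n : ℕ) (l' : List B), l'.length ≤ n →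
    ∃ l'', l''.Sublist l' ∧ π l'' = π l' ∧ cs.IsReduced l'' := by
  intro n
  induction n with
  | zero =>
    intro l' hl
    rw [Nat.le_zero, List.length_eq_zero_iff] at hl
    subst hl
    exact ⟨[], List.Sublist.refl _, rfl, by unfold CoxeterSystem.IsReduced; simp⟩
  | succ n ih =>
    intro l' hl
    by_cases hred : cs.IsReduced l'
    · exact ⟨l', List.Sublist.refl l', rfl, hred⟩
    have hne : l' ≠ [] := by
      intro h; apply hred; subst h; unfold CoxeterSystem.IsReduced; simp
    have hlpos : 0 < l'.length := List.length_pos_iff.mpr hne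
    have hP : ∃ k, ¬ cs.IsReduced (l'.take (k+1)) := by
      refine ⟨l'.length - 1, ?_⟩
      rwa [Nat.sub_add_cancel hlpos, List.take_length]
    have hk : ¬ cs.IsReduced (l'.take (Nat.find hP + 1)) := Nat.find_spec hP
    set k := Nat.find hP with hkdef
    have hmin : ∀ j, j < k → cs.IsReduced (l'.take (j+1)) := by
      intro j hj
      have := Nat.find_min hP hj
      simpa using this
    have hkl : k < l'.length := by
      by_contra hge
      push_neg at hge
      rcases Nat.lt_or_ge 0 k with hkpos | hk0
      · have h1 : l'.length - 1 < k := by omega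
        have h2 := hmin _ h1
        rw [Nat.sub_add_cancel hlpos, List.take_length] at h2
        exact hred h2
      · -- k = 0 and l'.length = 0, contradiction with hlpos
        omega
    have hredk : cs.IsReduced (l'.take k) := by
      rcases Nat.eq_zero_or_pos k with h0 | h0
      · rw [h0]; unfold CoxeterSystem.IsReduced; simp
      · have := hmin (k-1) (by omega)
        rwa [Nat.sub_add_cancel h0] at this
    have htake : l'.take (k+1) = l'.take k ++ [l'[k]] := by
      rw [List.take_succ, List.getElem?_eq_getElem hkl]
      rfl
    have hu : ℓ (π (l'.take k)) = k := by
      have h := hredk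
      unfold CoxeterSystem.IsReduced at h
      rwa [List.length_take, min_eq_left hkl.le] at h
    have hprod1 : π (l'.take (k+1)) = π (l'.take k) * s l'[k] := by
      rw [htake, cs.wordProd_append, cs.wordProd_singleton]
    have hlen1 : ℓ (π (l'.take k) * s l'[k]) ≠ k + 1 := by
      intro hc1
      apply hk
      unfold CoxeterSystem.IsReduced
      rw [hprod1, hc1, List.length_take, min_eq_left (by omega)]
    have hdesc : ℓ (π (l'.take k) * s l'[k]) < ℓ (π (l'.take k)) := by
      rcases cs.length_mul_simple (π (l'.take k)) l'[k] with h | h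
      · exact absurd (by rw [h, hu]) hlen1
      · omega
    obtain ⟨j, hjlt, hje⟩ := strong_exchange_right cs (cs.isReflection_simple l'[k]) hdesc
    set l'' := (l'.take k).eraseIdx j ++ l'.drop (k+1) with hl''
    have hsub : l''.Sublist l' := by
      have h1 : ((l'.take k).eraseIdx j).Sublist (l'.take k) := List.eraseIdx_sublist _ j
      have h2 : (l'.drop (k+1)).Sublist (l'.drop k) := by
        rw [List.drop_eq_getElem_cons hkl]
        exact List.sublist_cons_self _ _
      have := List.Sublist.append h1 h2
      rwa [List.take_append_drop] at this
    have hprod : π l'' = π l' := by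
      rw [hl'', cs.wordProd_append, hje, ← hprod1, ← cs.wordProd_append,
        List.take_append_drop]
    have hlen'' : l''.length ≤ n := by
      have e1 : ((l'.take k).eraseIdx j).length + 1 = (l'.take k).length :=
        List.length_eraseIdx_add_one (by rwa [List.length_take, min_eq_left hkl.le] at hjlt ⊢)
      rw [hl'', List.length_append, List.length_drop]
      rw [List.length_take, min_eq_left hkl.le] at e1
      omega
    obtain ⟨l₃, hs3, hp3, hr3⟩ := ih l'' hlen''
    exact ⟨l₃, hs3.trans hsub, by rw [hp3, hprod], hr3⟩

lemma exists_reduced_sublist (l' : List B) :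
    ∃ l'', l''.Sublist l' ∧ π l'' = π l' ∧ cs.IsReduced l'' :=
  exists_reduced_sublist_aux cs l'.length l' le_rfl


/-! ### The chain (Bruhat) order -/

def ChStep (a b : W) : Prop := (∃ t, cs.IsReflection t ∧ b = a * t) ∧ ℓ a < ℓ b

def Ch : W → W → Prop := Relation.ReflTransGen (ChStep cs)

lemma ch_length_le {a b : W} (h : Ch cs a b) : ℓ a ≤ ℓ b := by
  induction h with
  | refl => exact le_rfl
  | tail _ hst ih => exact ih.trans hst.2.le

lemma ch_eq_or_lt {a b : W} (h : Ch cs a b) : a = b ∨ ℓ a < ℓ b := by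
  rcases Relation.ReflTransGen.cases_tail h with h' | ⟨c, hac, hcb⟩
  · exact Or.inl h'.symm
  · exact Or.inr (lt_of_le_of_lt (ch_length_le cs hac) hcb.2)

lemma chStep_simple_left {a : W} (i : B) (h : ℓ a < ℓ (s i * a)) :
    ChStep cs a (s i * a) := by
  refine ⟨⟨a⁻¹ * s i * a, ?_, by group⟩, h⟩
  have := (cs.isReflection_simple i).conj a⁻¹
  rwa [inv_inv] at this

lemma chStep_simple_left_down {a : W} (i : B) (h : ℓ (s i * a) < ℓ a) :
    ChStep cs (s i * a) a := by
  refine ⟨⟨a⁻¹ * s i * a, ?_, ?_⟩, h⟩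
  · have := (cs.isReflection_simple i).conj a⁻¹
    rwa [inv_inv] at this
  · have : (s i * a) * (a⁻¹ * s i * a) = s i * (s i * a) := by group
    rw [this, cs.simple_mul_simple_cancel_left]

/-- one-step lifting property -/
lemma step_lift {x t : W} (ht : cs.IsReflection t) (hlt : ℓ x < ℓ (x * t)) (i : B)
    (hi : ℓ x < ℓ (s i * x)) (hi' : ℓ (s i * (x * t)) < ℓ (x * t)) :
    Ch cs (s i * x) (x * t) := by
  obtain ⟨m₀, hm₀len, hm₀⟩ : ∃ m₀ : List B, m₀.length = cs.length (s i * (x * t)) ∧ (s i * (x * t)) = cs.wordProd m₀ := by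
    obtain ⟨q, hq1, hq2⟩ := cs.exists_isReduced (s i * (x * t)); exact ⟨q, by rw [hq2]; exact hq1.symm, hq2⟩
  have hm₀red : cs.IsReduced m₀ := by
    unfold CoxeterSystem.IsReduced; rw [← hm₀, hm₀len]
  have hπm : π (i :: m₀) = x * t := by
    rw [cs.wordProd_cons, ← hm₀, cs.simple_mul_simple_cancel_left]
  have hxt : π (i :: m₀) * t = x := by
    rw [hπm, mul_assoc, ht.mul_self, mul_one]
  have hlt' : ℓ (π (i :: m₀) * t) < ℓ (π (i :: m₀)) := by rw [hxt, hπm]; exact hlt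
  obtain ⟨j, hj, hje⟩ := strong_exchange_right cs ht hlt'
  rw [hxt] at hje
  match j with
  | 0 =>
    rw [List.eraseIdx_cons_zero] at hje
    -- hje : π m₀ = x, so s i * x = x * t
    have heq : s i * x = x * t := by
      have h2 : s i * (x * t) = x := by rw [hm₀, hje]
      calc s i * x = s i * (s i * (x * t)) := by rw [h2]
        _ = x * t := cs.simple_mul_simple_cancel_left i
    rw [heq]
    exact Relation.ReflTransGen.refl
  | (j₀+1) =>
    rw [List.eraseIdx_cons_succ] at hje
    have hy : π (m₀.eraseIdx j₀) = s i * x := by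
      rw [cs.wordProd_cons] at hje
      rw [← hje, cs.simple_mul_simple_cancel_left]
    have hj₀ : j₀ < m₀.length := by simpa using hj
    set t'' := (cs.rightInvSeq m₀).getD j₀ 1 with ht''
    have hmem : t'' ∈ cs.rightInvSeq m₀ := by
      rw [ht'', List.getD_eq_getElem _ 1 (by rwa [cs.length_rightInvSeq])]
      exact List.getElem_mem _
    have hrefl'' : cs.IsReflection t'' := cs.isReflection_of_mem_rightInvSeq m₀ hmem
    have hkey : π m₀ * t'' = π (m₀.eraseIdx j₀) := cs.wordProd_mul_getD_rightInvSeq m₀ j₀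
    have hylen : ℓ (π (m₀.eraseIdx j₀)) < ℓ (π m₀) := by
      have h1 : ℓ (π (m₀.eraseIdx j₀)) ≤ (m₀.eraseIdx j₀).length := cs.length_wordProd_le _
      have h2 : (m₀.eraseIdx j₀).length + 1 = m₀.length := List.length_eraseIdx_add_one hj₀
      have h3 : ℓ (π m₀) = m₀.length := hm₀red
      omega
    -- step from π (m₀.eraseIdx j₀) up to π m₀
    have hst1 : ChStep cs (π (m₀.eraseIdx j₀)) (π m₀) := by
      refine ⟨⟨t'', hrefl'', ?_⟩, hylen⟩
      rw [← hkey, mul_assoc, hrefl''.mul_self, mul_one]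
    have hst2 : ChStep cs (π m₀) (x * t) := by
      rw [← hm₀]
      exact chStep_simple_left_down cs i hi'
    rw [← hy]
    exact (Relation.ReflTransGen.single hst1).tail hst2

/-- Lifting property for the chain order. -/
lemma ch_lift {u D : W} (h : Ch cs u D) (i : B) (hD : ℓ D < ℓ (s i * D)) :
    Ch cs (s i * u) (s i * D) := by
  induction h using Relation.ReflTransGen.head_induction_on with
  | refl => exact Relation.ReflTransGen.refl
  | head hst hch ih =>
    rename_i a c
    by_cases hdesc : ℓ (s i * a) < ℓ a
    · -- go down, then along the chain, then up
      have c1 : Ch cs (s i * a) a := Relation.ReflTransGen.single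
        (chStep_simple_left_down cs i hdesc)
      have c2 : Ch cs a D := Relation.ReflTransGen.head hst hch
      have c3 : Ch cs D (s i * D) := Relation.ReflTransGen.single
        (chStep_simple_left cs i hD)
      exact (c1.trans c2).trans c3
    · have hasc : ℓ a < ℓ (s i * a) :=
        lt_of_le_of_ne (not_lt.mp hdesc) (Ne.symm (cs.length_simple_mul_ne a i))
      obtain ⟨⟨t, htr, rfl⟩, hlen⟩ := hst
      by_cases hc : ℓ (s i * (a * t)) < ℓ (a * t)
      · -- one-step lifting
        have c1 : Ch cs (s i * a) (a * t) := step_lift cs htr hlen i hasc hc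
        have c3 : Ch cs D (s i * D) := Relation.ReflTransGen.single
          (chStep_simple_left cs i hD)
        exact (c1.trans hch).trans c3
      · have hcasc : ℓ (a * t) < ℓ (s i * (a * t)) :=
          lt_of_le_of_ne (not_lt.mp hc) (Ne.symm (cs.length_simple_mul_ne (a * t) i))
        have hst' : ChStep cs (s i * a) (s i * (a * t)) := by
          refine ⟨⟨t, htr, (mul_assoc _ _ _).symm⟩, ?_⟩
          rcases cs.length_simple_mul a i with h1 | h1 <;>
            rcases cs.length_simple_mul (a * t) i with h2 | h2 <;> omega
        exact Relation.ReflTransGen.head hst' ih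

/-- subword implies chain order -/
lemma sub_ch {l l' : List B} (hsub : l'.Sublist l) :
    cs.IsReduced l → Ch cs (π l') (π l) := by
  induction hsub with
  | slnil => intro _; exact Relation.ReflTransGen.refl
  | @cons l₁ l₂ a h ih =>
    intro hred
    have hredl : cs.IsReduced l₂ := by
      have := CoxeterSystem.IsReduced.drop (ω := a :: l₂) hred 1
      simpa using this
    have h1 : Ch cs (π l₁) (π l₂) := ih hredl
    have h2 : ChStep cs (π l₂) (π (a :: l₂)) := by
      rw [cs.wordProd_cons]
      apply chStep_simple_left
      have e1 : ℓ (π (a :: l₂)) = l₂.length + 1 := by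
        have := hred
        unfold CoxeterSystem.IsReduced at this
        rw [this]; simp
      have e2 : ℓ (π l₂) = l₂.length := hredl
      rw [cs.wordProd_cons] at e1
      omega
    exact h1.tail h2
  | @cons_cons l₁ l₂ a h ih =>
    intro hred
    have hredl : cs.IsReduced l₂ := by
      have := CoxeterSystem.IsReduced.drop (ω := a :: l₂) hred 1
      simpa using this
    have h1 : Ch cs (π l₁) (π l₂) := ih hredl
    have hD : ℓ (π l₂) < ℓ (s a * π l₂) := by
      have e1 : ℓ (π (a :: l₂)) = l₂.length + 1 := by
        have := hred
        unfold CoxeterSystem.IsReduced at this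
        rw [this]; simp
      have e2 : ℓ (π l₂) = l₂.length := hredl
      rw [cs.wordProd_cons] at e1
      omega
    have := ch_lift cs h1 a hD
    rwa [cs.wordProd_cons, cs.wordProd_cons]

/-- chain order implies subword of every reduced word -/
lemma ch_sub_aux : ∀ (N : ℕ) {v w : W}, ℓ w ≤ N → Ch cs v w →
    ∀ {m : List B}, cs.IsReduced m → π m = w →
    ∃ m', m'.Sublist m ∧ π m' = v ∧ cs.IsReduced m' := by
  intro N
  induction N with
  | zero =>
    intro v w hw hch m hm hpm
    rcases ch_eq_or_lt cs hch with rfl | hlt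
    · exact ⟨m, List.Sublist.refl m, hpm, hm⟩
    · omega
  | succ N ih =>
    intro v w hw hch m hm hpm
    rcases Relation.ReflTransGen.cases_tail hch with rfl | ⟨c, hvc, ⟨⟨t, htr, hcw⟩, hlen⟩⟩
    · exact ⟨m, List.Sublist.refl m, hpm, hm⟩
    · have hct : π m * t = c := by
        rw [hpm, hcw, mul_assoc, htr.mul_self, mul_one]
      have hlt : ℓ (π m * t) < ℓ (π m) := by rw [hct, hpm]; exact hlen
      obtain ⟨j, hj, hje⟩ := strong_exchange_right cs htr hlt
      obtain ⟨κ, hκsub, hκprod, hκred⟩ := exists_reduced_sublist cs (m.eraseIdx j)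
      have hκc : π κ = c := by rw [hκprod, hje, hct]
      have hcN : ℓ c ≤ N := by omega
      obtain ⟨m', hm'sub, hm'p, hm'red⟩ := ih hcN hvc hκred hκc
      exact ⟨m', (hm'sub.trans hκsub).trans (List.eraseIdx_sublist m j), hm'p, hm'red⟩

lemma ch_sub {v w : W} (hch : Ch cs v w) {m : List B} (hm : cs.IsReduced m) (hpm : π m = w) :
    ∃ m', m'.Sublist m ∧ π m' = v ∧ cs.IsReduced m' :=
  ch_sub_aux cs (ℓ w) le_rfl hch hm hpm

/-! ### Bruhat order facts -/

lemma bruhat_of_ch {v w : W} (h : Ch cs v w) : BruhatLE cs v w := by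
  obtain ⟨ω, hlen, hw⟩ : ∃ ω : List B, ω.length = cs.length w ∧ w = cs.wordProd ω := by
    obtain ⟨q, hq1, hq2⟩ := cs.exists_isReduced w; exact ⟨q, by rw [hq2]; exact hq1.symm, hq2⟩
  have hred : cs.IsReduced ω := by unfold CoxeterSystem.IsReduced; rw [← hw, hlen]
  obtain ⟨m', hsub, hp, _⟩ := ch_sub cs h hred hw.symm
  exact ⟨ω, hred, hw.symm, m', hsub, hp⟩

lemma ch_of_bruhat {v w : W} (h : BruhatLE cs v w) : Ch cs v w := by
  obtain ⟨l, hred, hpl, l', hsub, hpl'⟩ := h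
  have := sub_ch cs hsub hred
  rwa [hpl, hpl'] at this

lemma bruhat_refl (w : W) : BruhatLE cs w w := by
  obtain ⟨ω, hlen, hw⟩ : ∃ ω : List B, ω.length = cs.length w ∧ w = cs.wordProd ω := by
    obtain ⟨q, hq1, hq2⟩ := cs.exists_isReduced w; exact ⟨q, by rw [hq2]; exact hq1.symm, hq2⟩
  have hred : cs.IsReduced ω := by unfold CoxeterSystem.IsReduced; rw [← hw, hlen]
  exact ⟨ω, hred, hw.symm, ω, List.Sublist.refl ω, hw.symm⟩

lemma bruhat_trans {u v w : W} (h1 : BruhatLE cs u v) (h2 : BruhatLE cs v w) :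
    BruhatLE cs u w :=
  bruhat_of_ch cs ((ch_of_bruhat cs h1).trans (ch_of_bruhat cs h2))

lemma bruhat_length_le {v w : W} (h : BruhatLE cs v w) : ℓ v ≤ ℓ w :=
  ch_length_le cs (ch_of_bruhat cs h)

lemma bruhat_le_one {v : W} (h : BruhatLE cs v 1) : v = 1 := by
  have := bruhat_length_le cs h
  rw [cs.length_one] at this
  exact cs.length_eq_zero_iff.mp (Nat.le_zero.mp this)

lemma bruhat_simple_mul_le {v : W} {i : B} (h : ℓ (s i * v) < ℓ v) :
    BruhatLE cs (s i * v) v := by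
  obtain ⟨r, hrlen, hr⟩ : ∃ r : List B, r.length = cs.length (s i * v) ∧ (s i * v) = cs.wordProd r := by
    obtain ⟨q, hq1, hq2⟩ := cs.exists_isReduced (s i * v); exact ⟨q, by rw [hq2]; exact hq1.symm, hq2⟩
  have hrred : cs.IsReduced r := by unfold CoxeterSystem.IsReduced; rw [← hr, hrlen]
  have hπ : π (i :: r) = v := by
    rw [cs.wordProd_cons, ← hr, cs.simple_mul_simple_cancel_left]
  have hred : cs.IsReduced (i :: r) := by
    unfold CoxeterSystem.IsReduced
    rw [hπ]
    rcases cs.length_simple_mul v i with h1 | h1 <;>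
      rcases cs.length_simple_mul (s i * v) i with h2 | h2 <;> simp <;> omega
  exact ⟨i :: r, hred, hπ, r, List.sublist_cons_self i r, hr.symm⟩

/-- The key decomposition of the Bruhat interval below `w` relative to a left descent. -/
lemma bruhat_decomp {w : W} {i : B} (hiw : ℓ (s i * w) < ℓ w) (v : W) :
    BruhatLE cs v w ↔
      (BruhatLE cs v (s i * w) ∧ ℓ v < ℓ (s i * v)) ∨
      (∃ v', v = s i * v' ∧ BruhatLE cs v' (s i * w) ∧ ℓ v' < ℓ (s i * v')) := by
  obtain ⟨r, hrlen, hr⟩ : ∃ r : List B, r.length = cs.length (s i * w) ∧ (s i * w) = cs.wordProd r := by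
    obtain ⟨q, hq1, hq2⟩ := cs.exists_isReduced (s i * w); exact ⟨q, by rw [hq2]; exact hq1.symm, hq2⟩
  have hrred : cs.IsReduced r := by unfold CoxeterSystem.IsReduced; rw [← hr, hrlen]
  have hπ : π (i :: r) = w := by
    rw [cs.wordProd_cons, ← hr, cs.simple_mul_simple_cancel_left]
  have hred : cs.IsReduced (i :: r) := by
    unfold CoxeterSystem.IsReduced
    rw [hπ]
    rcases cs.length_simple_mul w i with h1 | h1 <;> simp <;> omega
  constructor
  · intro h
    obtain ⟨m', hsub, hp, hred'⟩ := ch_sub cs (ch_of_bruhat cs h) hred hπ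
    rcases List.sublist_cons_iff.mp hsub with hsub' | ⟨m'', rfl, hsub''⟩
    · have hvu : BruhatLE cs v (s i * w) := ⟨r, hrred, hr.symm, m', hsub', hp⟩
      by_cases hv : ℓ v < ℓ (s i * v)
      · exact Or.inl ⟨hvu, hv⟩
      · have hdesc : ℓ (s i * v) < ℓ v :=
          lt_of_le_of_ne (not_lt.mp hv) (cs.length_simple_mul_ne v i)
        refine Or.inr ⟨s i * v, ?_, ?_, ?_⟩
        · rw [cs.simple_mul_simple_cancel_left]
        · exact bruhat_trans cs (bruhat_simple_mul_le cs hdesc) hvu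
        · rw [cs.simple_mul_simple_cancel_left]
          exact hdesc
    · -- m' = i :: m''
      have hm''red : cs.IsReduced m'' := by
        have := CoxeterSystem.IsReduced.drop (ω := i :: m'') hred' 1
        simpa using this
      refine Or.inr ⟨π m'', ?_, ?_, ?_⟩
      · rw [← hp, cs.wordProd_cons]
      · exact ⟨r, hrred, hr.symm, m'', hsub'', rfl⟩
      · have e1 : ℓ (π (i :: m'')) = m''.length + 1 := by
          have := hred'
          unfold CoxeterSystem.IsReduced at this
          rw [this]; simp
        have e2 : ℓ (π m'') = m''.length := hm''red
        rw [cs.wordProd_cons] at e1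
        omega
  · rintro (⟨hvu, _⟩ | ⟨v', rfl, hv'u, hasc⟩)
    · exact bruhat_trans cs hvu (bruhat_simple_mul_le cs hiw)
    · obtain ⟨m'', hsub, hp, _⟩ := ch_sub cs (ch_of_bruhat cs hv'u) hrred hr.symm
      exact ⟨i :: r, hred, hπ, i :: m'', hsub.cons₂ i, by rw [cs.wordProd_cons, hp]⟩


end NilHeckeProof
namespace NilHeckeProof

variable {B W : Type*} [Group W] {M : CoxeterMatrix B} (cs : CoxeterSystem M W)

local prefix:100 "s" => cs.simple
local prefix:100 "π" => cs.wordProd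
local prefix:100 "ℓ" => cs.length

variable {A : Type*} [Ring A]

lemma neg_one_pow_mul_comm (k : ℕ) (x : A) : (-1 : A) ^ k * x = x * (-1 : A) ^ k := by
  rcases Nat.even_or_odd k with h | h
  · rw [h.neg_one_pow, one_mul, mul_one]
  · rw [h.neg_one_pow, neg_one_mul, mul_neg_one]

section Algebra

variable (S : B → A) (F : W → A)

lemma F_one (hF : ∀ l : List B, cs.IsReduced l → F (cs.wordProd l) = (l.map S).prod) :
    F 1 = 1 := by
  have := hF [] (by unfold CoxeterSystem.IsReduced; simp)
  simpa using this

lemma F_mul_simple (hF : ∀ l : List B, cs.IsReduced l → F (cs.wordProd l) = (l.map S).prod)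
    {v : W} {i : B} (h : ℓ v < ℓ (s i * v)) :
    F (s i * v) = S i * F v := by
  obtain ⟨r, hrlen, hr⟩ : ∃ r : List B, r.length = cs.length v ∧ v = cs.wordProd r := by
    obtain ⟨q, hq1, hq2⟩ := cs.exists_isReduced v; exact ⟨q, by rw [hq2]; exact hq1.symm, hq2⟩
  have hrred : cs.IsReduced r := by unfold CoxeterSystem.IsReduced; rw [← hr, hrlen]
  have hπ : π (i :: r) = s i * v := by rw [cs.wordProd_cons, ← hr]
  have hred : cs.IsReduced (i :: r) := by
    unfold CoxeterSystem.IsReduced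
    rw [hπ]
    rcases cs.length_simple_mul v i with h1 | h1 <;> simp <;> omega
  have h1 := hF (i :: r) hred
  rw [hπ] at h1
  rw [h1, List.map_cons, List.prod_cons, ← hF r hrred, ← hr]

lemma F_absorb (hF : ∀ l : List B, cs.IsReduced l → F (cs.wordProd l) = (l.map S).prod)
    (hS : ∀ i, S i * S i = S i) {v : W} {i : B} (h : ℓ (s i * v) < ℓ v) :
    S i * F v = F v := by
  set v' := s i * v with hv'
  have hvv : s i * v' = v := by rw [hv', cs.simple_mul_simple_cancel_left]
  have h' : ℓ v' < ℓ (s i * v') := by rw [hvv]; exact h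
  have h1 : F v = S i * F v' := by rw [← hvv]; exact F_mul_simple cs S F hF h'
  rw [h1, ← mul_assoc, hS i]

end Algebra

/-- The main expansion lemma. -/
lemma expansion [Fintype W] (S : B → A) (hS : ∀ i, S i * S i = S i) (F G : W → A)
    (hF : ∀ l : List B, cs.IsReduced l → F (π l) = (l.map S).prod)
    (hG : ∀ l : List B, cs.IsReduced l → G (π l) = (l.map fun i => 1 - S i).prod) :
    ∀ w : W, G w = ∑ v ∈ Finset.univ.filter (fun v => BruhatLE cs v w),
      ((-1 : A) ^ ℓ v) * F v := by
  have hmain : ∀ (N : ℕ) (w : W), ℓ w ≤ N →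
      G w = ∑ v ∈ Finset.univ.filter (fun v => BruhatLE cs v w), ((-1 : A) ^ ℓ v) * F v := by
    intro N
    induction N with
    | zero =>
      intro w hw
      have hw1 : w = 1 := cs.length_eq_zero_iff.mp (Nat.le_zero.mp hw)
      subst hw1
      have hfilt : Finset.univ.filter (fun v => BruhatLE cs v (1 : W)) = {1} := by
        ext v
        simp only [Finset.mem_filter, Finset.mem_univ, true_and, Finset.mem_singleton]
        exact ⟨fun h => bruhat_le_one cs h, fun h => h ▸ bruhat_refl cs 1⟩
      rw [hfilt, Finset.sum_singleton, cs.length_one, pow_zero, one_mul,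
        F_one cs S F hF, F_one cs (fun i => 1 - S i) G hG]
    | succ N ih =>
      intro w hw
      by_cases hw1 : w = 1
      · subst hw1
        have hfilt : Finset.univ.filter (fun v => BruhatLE cs v (1 : W)) = {1} := by
          ext v
          simp only [Finset.mem_filter, Finset.mem_univ, true_and, Finset.mem_singleton]
          exact ⟨fun h => bruhat_le_one cs h, fun h => h ▸ bruhat_refl cs 1⟩
        rw [hfilt, Finset.sum_singleton, cs.length_one, pow_zero, one_mul,
          F_one cs S F hF, F_one cs (fun i => 1 - S i) G hG]
      · obtain ⟨i, hi⟩ := cs.exists_leftDescent_of_ne_one hw1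
        have hiw : ℓ (s i * w) < ℓ w := hi
        have hwu : s i * (s i * w) = w := by rw [cs.simple_mul_simple_cancel_left]
        have hlu : ℓ (s i * w) + 1 = ℓ w := by
          rcases cs.length_simple_mul w i with h1 | h1 <;> omega
        -- G w = (1 - S i) * G u
        have hGw : G w = (1 - S i) * G (s i * w) := by
          obtain ⟨r, hrlen, hr⟩ : ∃ r : List B, r.length = cs.length (s i * w) ∧ (s i * w) = cs.wordProd r := by
            obtain ⟨q, hq1, hq2⟩ := cs.exists_isReduced (s i * w); exact ⟨q, by rw [hq2]; exact hq1.symm, hq2⟩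
          have hrred : cs.IsReduced r := by unfold CoxeterSystem.IsReduced; rw [← hr, hrlen]
          have hπ : π (i :: r) = w := by rw [cs.wordProd_cons, ← hr, hwu]
          have hred : cs.IsReduced (i :: r) := by
            unfold CoxeterSystem.IsReduced
            rw [hπ, ← hlu]
            simp [← hrlen]
          have h1 := hG (i :: r) hred
          rw [hπ, List.map_cons, List.prod_cons, ← hG r hrred, ← hr] at h1
          exact h1
        have hIH := ih (s i * w) (by omega)
        -- the ascending part of the interval below u
        set Fa := (Finset.univ.filter (fun v => BruhatLE cs v (s i * w))).filter
          (fun v => ℓ v < ℓ (s i * v)) with hFa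
        have hasc_succ : ∀ v, ℓ v < ℓ (s i * v) → ℓ (s i * v) = ℓ v + 1 := by
          intro v h
          rcases cs.length_simple_mul v i with h1 | h1 <;> omega
        -- step 1 : (1 - S i) * G u = ∑ over Fa of (-1)^ℓv (F v - F (s i v))
        have step1 : G w = ∑ v ∈ Fa, ((-1 : A) ^ ℓ v) * (F v - F (s i * v)) := by
          rw [hGw, hIH, Finset.mul_sum]
          have hsplit := Finset.sum_filter_add_sum_filter_not
            (Finset.univ.filter (fun v => BruhatLE cs v (s i * w)))
            (fun v => ℓ v < ℓ (s i * v))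
            (fun v => (1 - S i) * (((-1 : A) ^ ℓ v) * F v))
          rw [← hsplit, ← hFa]
          have hzero : ∑ v ∈ (Finset.univ.filter (fun v => BruhatLE cs v (s i * w))).filter
              (fun v => ¬ ℓ v < ℓ (s i * v)), (1 - S i) * (((-1 : A) ^ ℓ v) * F v) = 0 := by
            apply Finset.sum_eq_zero
            intro v hv
            simp only [Finset.mem_filter] at hv
            have hdesc : ℓ (s i * v) < ℓ v :=
              lt_of_le_of_ne (not_lt.mp hv.2) (cs.length_simple_mul_ne v i)
            have habs := F_absorb cs S F hF hS hdesc
            rw [← mul_assoc, ← neg_one_pow_mul_comm, mul_assoc, sub_mul, one_mul, habs,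
              sub_self, mul_zero]
          rw [hzero, add_zero]
          apply Finset.sum_congr rfl
          intro v hv
          simp only [hFa, Finset.mem_filter] at hv
          have hF' := F_mul_simple cs S F hF hv.2
          rw [← mul_assoc, ← neg_one_pow_mul_comm, mul_assoc, sub_mul, one_mul, ← hF']
        -- step 2 : the Bruhat interval below w decomposes
        have hdecomp : Finset.univ.filter (fun v => BruhatLE cs v w)
            = Fa ∪ Fa.image (fun v => s i * v) := by
          ext v
          simp only [hFa, Finset.mem_union, Finset.mem_image, Finset.mem_filter,
            Finset.mem_univ, true_and]
          rw [bruhat_decomp cs hiw v]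
          constructor
          · rintro (h | ⟨v', rfl, h1, h2⟩)
            · exact Or.inl h
            · exact Or.inr ⟨v', ⟨h1, h2⟩, rfl⟩
          · rintro (h | ⟨v', ⟨h1, h2⟩, rfl⟩)
            · exact Or.inl h
            · exact Or.inr ⟨v', rfl, h1, h2⟩
        have hdisj : Disjoint Fa (Fa.image (fun v => s i * v)) := by
          rw [Finset.disjoint_left]
          intro v hv hv'
          simp only [hFa, Finset.mem_filter, Finset.mem_image, Finset.mem_univ, true_and] at hv hv'
          obtain ⟨v', ⟨_, hasc⟩, rfl⟩ := hv'
          have h1 : ℓ (s i * (s i * v')) = ℓ v' := by rw [cs.simple_mul_simple_cancel_left]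
          omega
        have hinj : ∀ v' ∈ Fa, ∀ v'' ∈ Fa,
            (fun v => s i * v) v' = (fun v => s i * v) v'' → v' = v'' := by
          intro v' _ v'' _ h
          exact mul_left_cancel h
        rw [step1, hdecomp, Finset.sum_union hdisj, Finset.sum_image hinj]
        have himg : ∀ v ∈ Fa, ((-1 : A) ^ ℓ (s i * v)) * F (s i * v)
            = -(((-1 : A) ^ ℓ v) * F (s i * v)) := by
          intro v hv
          simp only [hFa, Finset.mem_filter] at hv
          rw [hasc_succ v hv.2, pow_succ, mul_neg_one, neg_mul]
        rw [Finset.sum_congr rfl himg, ← Finset.sum_add_distrib]  -- careful direction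
        apply Finset.sum_congr rfl
        intro v _
        rw [mul_sub, sub_eq_add_neg]
  intro w
  exact hmain (ℓ w) w le_rfl


end NilHeckeProof

/-- For `w` in a Weyl group `W` (presented as a Coxeter system `cs`),
with `T_w` the reduced-word products of the idempotent generators `T_i` and `ε_w`
the reduced-word products of `ε_i = 1 − T_i` in the nil-Hecke algebra, one has
`ε_w = Σ_{v ≤ w} (−1)^{ℓ(v)} T_v` and `T_w = Σ_{v ≤ w} (−1)^{ℓ(v)} ε_v`,
where `≤` is the Bruhat order and `ℓ` the length function. -/
theorem eps_T_inclusion_exclusion {n : ℕ} {W : Type*} [Group W] [Fintype W]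
    (M : CoxeterMatrix (Fin n)) (cs : CoxeterSystem M W)
    {A : Type*} [Ring A] (T : Fin n → A)
    (hidem : ∀ i, T i * T i = T i)
    (hbraid : ∀ i j, altProd (T i) (T j) (M.M i j) = altProd (T j) (T i) (M.M i j))
    (Tw Eps : W → A)
    (hTw : ∀ l : List (Fin n), cs.IsReduced l →
      Tw (cs.wordProd l) = (l.map T).prod)
    (hEps : ∀ l : List (Fin n), cs.IsReduced l →
      Eps (cs.wordProd l) = (l.map fun i => 1 - T i).prod) :
    ∀ w : W,
      Eps w = ∑ v ∈ Finset.univ.filter (fun v => BruhatLE cs v w),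
          ((-1 : A) ^ cs.length v) * Tw v ∧
      Tw w = ∑ v ∈ Finset.univ.filter (fun v => BruhatLE cs v w),
          ((-1 : A) ^ cs.length v) * Eps v := by
  intro w
  have hS' : ∀ i : Fin n, (1 - T i) * (1 - T i) = 1 - T i := by
    intro i
    calc (1 - T i) * (1 - T i) = 1 - T i - T i + T i * T i := by noncomm_ring
      _ = 1 - T i := by rw [hidem i]; noncomm_ring
  have hG' : ∀ l : List (Fin n), cs.IsReduced l →
      Tw (cs.wordProd l) = (l.map fun i => 1 - (1 - T i)).prod := by
    intro l hl
    rw [hTw l hl]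
    congr 1
    apply List.map_congr_left
    intro i _
    rw [sub_sub_cancel]
  exact ⟨NilHeckeProof.expansion cs T hidem Tw Eps hTw hEps w,
    NilHeckeProof.expansion cs (fun i => 1 - T i) hS' Eps Tw hEps hG' w⟩
end
end

section
/- In Q ⊗_R K_T(G/B), there exist elements b_w, w ∈ W, satisfying X^λ b_w = e^{wλ} b_w for all λ ∈ P, given by b_1 = [O_{X_1}] and b_{ws_i} = τ_i b_w for ws_i > w, where τ_i = T_i − 1/(1 − X^{−α_i}); these b_w form a Q-basis of Q ⊗_R K_T(G/B). -/
open scoped Classical TensorProduct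

noncomputable section

lemma geom_div {P : Type*} [AddCommGroup P] (α lam : P) (m : ℤ) :
    ∃ q : AddMonoidAlgebra ℤ P,
      (AddMonoidAlgebra.single lam 1 : AddMonoidAlgebra ℤ P)
          - AddMonoidAlgebra.single (lam - m • α) 1
        = (1 - AddMonoidAlgebra.single (-α) 1) * q := by
  suffices h : ∃ q : AddMonoidAlgebra ℤ P,
      (1 : AddMonoidAlgebra ℤ P) - AddMonoidAlgebra.single (-(m • α)) 1
        = (1 - AddMonoidAlgebra.single (-α) 1) * q by
    obtain ⟨q, hq⟩ := h
    refine ⟨AddMonoidAlgebra.single lam 1 * q, ?_⟩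
    have key : (AddMonoidAlgebra.single lam 1 : AddMonoidAlgebra ℤ P) *
        (1 - AddMonoidAlgebra.single (-(m • α)) 1)
        = AddMonoidAlgebra.single lam 1 - AddMonoidAlgebra.single (lam - m • α) 1 := by
      rw [mul_sub, mul_one, AddMonoidAlgebra.single_mul_single, mul_one, sub_eq_add_neg lam]
    rw [← key, hq]; ring
  induction m using Int.induction_on with
  | zero =>
    exact ⟨0, by rw [zero_smul, neg_zero, ← AddMonoidAlgebra.one_def, sub_self, mul_zero]⟩
  | succ k ih =>
    obtain ⟨q, hq⟩ := ih
    refine ⟨q * AddMonoidAlgebra.single (-α) 1 + 1, ?_⟩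
    have e1 : AddMonoidAlgebra.single (-(((k : ℤ) + 1) • α)) (1 : ℤ)
        = AddMonoidAlgebra.single (-((k : ℤ) • α)) 1 * AddMonoidAlgebra.single (-α) 1 := by
      rw [AddMonoidAlgebra.single_mul_single, mul_one]
      congr 1
      rw [add_smul, one_smul, neg_add]
    rw [e1]
    linear_combination (AddMonoidAlgebra.single (-α) (1:ℤ) : AddMonoidAlgebra ℤ P) * hq
  | pred k ih =>
    obtain ⟨q, hq⟩ := ih
    refine ⟨q * AddMonoidAlgebra.single α 1 - AddMonoidAlgebra.single α 1, ?_⟩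
    have e1 : AddMonoidAlgebra.single (-((-(k : ℤ) - 1) • α)) (1 : ℤ)
        = AddMonoidAlgebra.single (-((-(k : ℤ)) • α)) 1 * AddMonoidAlgebra.single α 1 := by
      rw [AddMonoidAlgebra.single_mul_single, mul_one]
      congr 1
      rw [sub_smul, one_smul, neg_sub, neg_smul]
      abel
    have h1 : (AddMonoidAlgebra.single α 1 : AddMonoidAlgebra ℤ P)
        * AddMonoidAlgebra.single (-α) 1 = 1 := by
      rw [AddMonoidAlgebra.single_mul_single, mul_one, add_neg_cancel]
      rfl
    rw [e1]
    linear_combination (AddMonoidAlgebra.single α (1:ℤ) : AddMonoidAlgebra ℤ P) * hq - h1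

lemma eig_indep {Q V ι Λ : Type*} [Field Q] [AddCommGroup V] [Module Q V]
    (X : Λ → V →ₗ[Q] V) (χ : ι → Λ → Q) (x : ι → V) :
    ∀ s : Finset ι,
    (∀ i ∈ s, ∀ lam, X lam (x i) = χ i lam • x i) →
    (∀ i ∈ s, x i ≠ 0) →
    (∀ i ∈ s, ∀ j ∈ s, i ≠ j → ∃ lam, χ i lam ≠ χ j lam) →
    ∀ c : ι → Q, (∑ i ∈ s, c i • x i) = 0 → ∀ i ∈ s, c i = 0 := by
  intro s
  induction s using Finset.induction_on with
  | empty => intro _ _ _ c _ i hi; exact absurd hi (Finset.notMem_empty i)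
  | @insert a t ha IH =>
    intro hx hne hd c hc i hi
    have hat : a ∈ insert a t := Finset.mem_insert_self a t
    have hsub : ∀ j ∈ t, j ∈ insert a t := fun j hj => Finset.mem_insert_of_mem hj
    have key : ∀ lam : Λ, ∑ j ∈ t, (c j * (χ j lam - χ a lam)) • x j = 0 := by
      intro lam
      have hA : ∑ j ∈ insert a t, c j • χ j lam • x j = 0 := by
        have h1 : X lam (∑ j ∈ insert a t, c j • x j) = 0 := by rw [hc, map_zero]
        rw [map_sum] at h1
        rw [← h1]
        refine Finset.sum_congr rfl fun j hj => ?_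
        rw [map_smul, hx j hj]
      have hB : ∑ j ∈ insert a t, χ a lam • c j • x j = 0 := by
        have h2 : (χ a lam) • (∑ j ∈ insert a t, c j • x j) = 0 := by rw [hc, smul_zero]
        rwa [Finset.smul_sum] at h2
      have h3 : ∑ j ∈ insert a t, (c j * (χ j lam - χ a lam)) • x j = 0 := by
        have hcong : ∀ j ∈ insert a t, (c j * (χ j lam - χ a lam)) • x j
            = c j • χ j lam • x j - χ a lam • c j • x j := by
          intro j _
          rw [smul_smul, smul_smul, ← sub_smul]
          congr 1
          ring
        rw [Finset.sum_congr rfl hcong, Finset.sum_sub_distrib, hA, hB, sub_zero]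
      rw [Finset.sum_insert ha, sub_self, mul_zero, zero_smul, zero_add] at h3
      exact h3
    have ht0 : ∀ j ∈ t, c j = 0 := by
      intro j hj
      obtain ⟨lam, hlam⟩ := hd j (hsub j hj) a hat (by rintro rfl; exact ha hj)
      have := IH (fun j hj => hx j (hsub j hj)) (fun j hj => hne j (hsub j hj))
        (fun j hj k hk => hd j (hsub j hj) k (hsub k hk))
        (fun j => c j * (χ j lam - χ a lam)) (key lam) j hj
      rcases mul_eq_zero.mp this with h | h
      · exact h
      · exact absurd (sub_eq_zero.mp h) hlam
    have hca : c a = 0 := by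
      rw [Finset.sum_insert ha] at hc
      have hz : ∑ j ∈ t, c j • x j = 0 := by
        apply Finset.sum_eq_zero; intro j hj; rw [ht0 j hj, zero_smul]
      rw [hz, add_zero] at hc
      rcases smul_eq_zero.mp hc with h | h
      · exact h
      · exact absurd h (hne a hat)
    rcases Finset.mem_insert.mp hi with rfl | h
    · exact hca
    · exact ht0 i h

lemma tri_span {Q V ι : Type*} [Field Q] [AddCommGroup V] [Module Q V] [Fintype ι]
    (B : Module.Basis ι Q V) (ht : ι → ℕ) (f : ι → V) (S : Set ι)
    (hdc : ∀ i ∈ S, ∀ j : ι, ht j < ht i → j ∈ S)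
    (h1 : ∀ i ∈ S, B.repr (f i) i = 1)
    (h2 : ∀ i ∈ S, ∀ j, B.repr (f i) j ≠ 0 → j = i ∨ ht j < ht i) :
    ∀ i ∈ S, B i ∈ Submodule.span Q (f '' S) := by
  have step : ∀ i ∈ S, (∀ j : ι, ht j < ht i → B j ∈ Submodule.span Q (f '' S)) →
      B i ∈ Submodule.span Q (f '' S) := by
    intro i hi hlow
    have hsplit : B.repr (f i) i • B i
        + ∑ j ∈ Finset.univ.erase i, B.repr (f i) j • B j = f i := by
      exact (Finset.add_sum_erase Finset.univ (fun j => B.repr (f i) j • B j)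
        (Finset.mem_univ i)).trans (B.sum_repr (f i))
    rw [h1 i hi, one_smul] at hsplit
    have hBi : B i = f i - ∑ j ∈ Finset.univ.erase i, B.repr (f i) j • B j :=
      eq_sub_of_add_eq hsplit
    rw [hBi]
    refine sub_mem (Submodule.subset_span ⟨i, hi, rfl⟩) (Submodule.sum_mem _ ?_)
    intro j hj
    rcases eq_or_ne (B.repr (f i) j) 0 with h0 | h0
    · rw [h0, zero_smul]; exact Submodule.zero_mem _
    · rcases h2 i hi j h0 with rfl | hlt
      · exact absurd rfl (Finset.ne_of_mem_erase hj)
      · exact Submodule.smul_mem _ _ (hlow j hlt)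
  suffices h : ∀ N : ℕ, ∀ i ∈ S, ht i ≤ N → B i ∈ Submodule.span Q (f '' S) by
    intro i hi; exact h (ht i) i hi le_rfl
  intro N
  induction N with
  | zero => intro i hi hN; exact step i hi (fun j hj => absurd hj (by omega))
  | succ N IH =>
    intro i hi hN
    exact step i hi (fun j hj => IH j (hdc i hi j hj) (by omega))

lemma tau_comm {S : Type*} [Ring S] {A1 A2 T X0 v Pq t : S}
    (huv : (1 - X0) * v = 1) (hvu : v * (1 - X0) = 1)
    (h1' : A1 * X0 = X0 * A1) (h2' : A2 * X0 = X0 * A2)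
    (hcr : A1 * T = T * A2 + Pq)
    (hPq : A1 - A2 = (1 - X0) * Pq)
    (ht : t = T - v) :
    A1 * t = t * A2 := by
  set u : S := 1 - X0 with hudef
  have h1 : A1 * u = u * A1 := by rw [hudef, mul_sub, sub_mul, mul_one, one_mul, h1']
  have h2 : A2 * u = u * A2 := by rw [hudef, mul_sub, sub_mul, mul_one, one_mul, h2']
  let U : Sˣ := ⟨u, v, huv, hvu⟩
  have f6 : A1 * v = v * A1 :=
    Commute.units_inv_right (show Commute A1 ((U : Sˣ) : S) from h1)
  have f5' : Pq = v * A1 - v * A2 := by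
    have hx : v * (A1 - A2) = Pq := by rw [hPq, ← mul_assoc, hvu, one_mul]
    rw [← hx, mul_sub]
  calc A1 * t = A1 * T - A1 * v := by rw [ht, mul_sub]
    _ = (T * A2 + Pq) - v * A1 := by rw [hcr, f6]
    _ = (T * A2 + (v * A1 - v * A2)) - v * A1 := by rw [f5']
    _ = (T - v) * A2 := by rw [sub_mul]; abel
    _ = t * A2 := by rw [← ht]

set_option maxHeartbeats 2000000 in
/-- In `Q ⊗_R K_T(G/B)` there exist elements `b_w`, `w ∈ W`, with
`X^λ b_w = e^{wλ} b_w` for all `λ ∈ P`, given by `b_1 = [O_{X_1}]` and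
`b_{w s_i} = τ_i b_w` for `w s_i > w`, where `τ_i = T_i − 1/(1 − X^{−α_i})`; and these
`b_w` form a `Q`-basis of `Q ⊗_R K_T(G/B)`. -/
theorem eigenbasis_exists
    {n : ℕ} {W : Type*} [Group W] [Fintype W]
    (M : CoxeterMatrix (Fin n)) (cs : CoxeterSystem M W)
    {P : Type*} [AddCommGroup P]
    (wt : Module.Basis (Fin n) ℤ P) (alpha : Fin n → P)
    (sact : W →* Multiplicative (AddAut P))
    (hact : ∀ (i : Fin n) (lam : P),
      Multiplicative.toAdd (sact (cs.simple i)) lam = lam - wt.repr lam i • alpha i)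
    (hcart : ∀ i, wt.repr (alpha i) i = 2)
    (hinj : Function.Injective sact)
    (K : Type*) [AddCommGroup K] [Module (AddMonoidAlgebra ℤ P) K]
    (O : W → K)
    (hbasis : ∃ b : Module.Basis W (AddMonoidAlgebra ℤ P) K, ∀ w, b w = O w)
    (Ti : Fin n → Module.End (AddMonoidAlgebra ℤ P) K)
    (hTi : ∀ (i : Fin n) (w : W), Ti i (O w) =
      if cs.length w < cs.length (w * cs.simple i) then O (w * cs.simple i) else O w)
    (Xop : P → Module.End (AddMonoidAlgebra ℤ P) K)
    (hXadd : ∀ lam mu, Xop (lam + mu) = Xop lam * Xop mu)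
    (hX0 : Xop 0 = 1)
    (hXO1 : ∀ lam, Xop lam (O 1) = (AddMonoidAlgebra.single lam 1 : AddMonoidAlgebra ℤ P) • O 1)
    (hcross : ∀ (i : Fin n) (lam : P) (q : AddMonoidAlgebra ℤ P),
      ((AddMonoidAlgebra.single lam 1 : AddMonoidAlgebra ℤ P)
          - AddMonoidAlgebra.single (lam - wt.repr lam i • alpha i) 1
        = (1 - AddMonoidAlgebra.single (-(alpha i)) 1) * q) →
      Xop lam * Ti i = Ti i * Xop (lam - wt.repr lam i • alpha i)
        + q.coeff.sum (fun mu c => c • Xop mu))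
    (Q : Type*) [Field Q] [Algebra (AddMonoidAlgebra ℤ P) Q]
    [IsFractionRing (AddMonoidAlgebra ℤ P) Q]
    (tau : Fin n → Module.End Q (Q ⊗[AddMonoidAlgebra ℤ P] K))
    (hu : ∀ i, IsUnit ((1 : Module.End Q (Q ⊗[AddMonoidAlgebra ℤ P] K))
        - LinearMap.baseChange Q (Xop (-(alpha i)))))
    (htau : ∀ i, ((1 : Module.End Q (Q ⊗[AddMonoidAlgebra ℤ P] K))
        - LinearMap.baseChange Q (Xop (-(alpha i))))
        * (LinearMap.baseChange Q (Ti i) - tau i) = 1)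
    :
    ∃ b : W → Q ⊗[AddMonoidAlgebra ℤ P] K,
      b 1 = (1 : Q) ⊗ₜ O 1 ∧
      (∀ (w : W) (i : Fin n), cs.length w < cs.length (w * cs.simple i) →
        b (w * cs.simple i) = tau i (b w)) ∧
      (∀ (w : W) (lam : P),
        LinearMap.baseChange Q (Xop lam) (b w)
          = algebraMap (AddMonoidAlgebra ℤ P) Q
              (AddMonoidAlgebra.single (Multiplicative.toAdd (sact w) lam) 1) • b w) ∧
      LinearIndependent Q b ∧
      Submodule.span Q (Set.range b) = ⊤ := by
  classical
  obtain ⟨b0, hb0⟩ := hbasis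
  set B : Module.Basis W Q (Q ⊗[AddMonoidAlgebra ℤ P] K) := Algebra.TensorProduct.basis Q b0 with hBdef
  have hBapp : ∀ w : W, B w = (1 : Q) ⊗ₜ[AddMonoidAlgebra ℤ P] O w := by
    intro w
    rw [hBdef, Algebra.TensorProduct.basis_apply, hb0]
  -- characters
  set ch : W → P → Q := fun w lam =>
    algebraMap (AddMonoidAlgebra ℤ P) Q (AddMonoidAlgebra.single (Multiplicative.toAdd (sact w) lam) 1) with hchdef
  have hchd : ∀ v w : W, v ≠ w → ∃ lam, ch v lam ≠ ch w lam := by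
    intro v w hvw
    have h1 : sact v ≠ sact w := fun h => hvw (hinj h)
    have h2 : ∃ lam, Multiplicative.toAdd (sact v) lam ≠ Multiplicative.toAdd (sact w) lam := by
      by_contra h
      push_neg at h
      exact h1 (AddEquiv.ext h)
    obtain ⟨lam, hlam⟩ := h2
    refine ⟨lam, fun he => hlam ?_⟩
    have h3 := IsFractionRing.injective (AddMonoidAlgebra ℤ P) Q he
    exact AddMonoidAlgebra.single_left_injective (one_ne_zero (α := ℤ)) h3
  have hch_mul : ∀ (w : W) (i : Fin n) (lam : P),
      ch w (lam - wt.repr lam i • alpha i) = ch (w * cs.simple i) lam := by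
    intro w i lam
    simp only [hchdef]
    rw [← hact i lam, map_mul]
    rfl
  -- the algebra morphism Psi
  set F : Multiplicative P →* Module.End Q (Q ⊗[AddMonoidAlgebra ℤ P] K) :=
    { toFun := fun g => LinearMap.baseChange Q (Xop g.toAdd),
      map_one' := by
        show LinearMap.baseChange Q (Xop (0 : P)) = 1
        rw [hX0]
        exact LinearMap.baseChange_one _ _
      map_mul' := by
        intro g h
        show LinearMap.baseChange Q (Xop (g.toAdd + h.toAdd)) = _
        rw [hXadd]
        exact LinearMap.baseChange_mul _ _ } with hFdef
  set Psi := AddMonoidAlgebra.lift ℤ (Module.End Q (Q ⊗[AddMonoidAlgebra ℤ P] K)) P F with hPsidef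
  have hPsi_single : ∀ mu : P,
      Psi (AddMonoidAlgebra.single mu 1) = LinearMap.baseChange Q (Xop mu) := by
    intro mu
    rw [hPsidef, AddMonoidAlgebra.lift_single, one_smul]
    rfl
  -- base change of the cross relation, and the tau commutation
  have hvrep : ∀ i : Fin n,
      LinearMap.baseChange Q (Ti i) - tau i
        = (((hu i).unit⁻¹ : (Module.End Q (Q ⊗[AddMonoidAlgebra ℤ P] K))ˣ)
            : Module.End Q (Q ⊗[AddMonoidAlgebra ℤ P] K)) := by
    intro i
    refine (Units.inv_eq_of_mul_eq_one_right ?_).symm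
    rw [(hu i).unit_spec]
    exact htau i
  have hXcomm : ∀ a b : P,
      LinearMap.baseChange Q (Xop a) * LinearMap.baseChange Q (Xop b)
        = LinearMap.baseChange Q (Xop b) * LinearMap.baseChange Q (Xop a) := by
    intro a b
    rw [← LinearMap.baseChange_mul, ← LinearMap.baseChange_mul, ← hXadd, ← hXadd, add_comm]
  have hcomm : ∀ (i : Fin n) (lam : P),
      LinearMap.baseChange Q (Xop lam) * tau i
        = tau i * LinearMap.baseChange Q (Xop (lam - wt.repr lam i • alpha i)) := by
    intro i lam
    obtain ⟨q, hq⟩ := geom_div (alpha i) lam (wt.repr lam i)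
    have hc := hcross i lam q hq
    have hcQ : LinearMap.baseChange Q (Xop lam) * LinearMap.baseChange Q (Ti i)
        = LinearMap.baseChange Q (Ti i)
            * LinearMap.baseChange Q (Xop (lam - wt.repr lam i • alpha i)) + Psi q := by
      have hE := congrArg (Module.End.baseChangeHom (AddMonoidAlgebra ℤ P) Q K) hc
      have hsum : Module.End.baseChangeHom (AddMonoidAlgebra ℤ P) Q K
          (q.coeff.sum fun mu c => c • Xop mu) = Psi q := by
        rw [map_finsuppSum, hPsidef, AddMonoidAlgebra.lift_apply]
        refine Finsupp.sum_congr fun mu _ => ?_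
        rw [map_zsmul]
        rfl
      rw [map_mul, map_add, map_mul, hsum] at hE
      exact hE
    have f5 : LinearMap.baseChange Q (Xop lam)
        - LinearMap.baseChange Q (Xop (lam - wt.repr lam i • alpha i))
        = ((1 : Module.End Q (Q ⊗[AddMonoidAlgebra ℤ P] K))
            - LinearMap.baseChange Q (Xop (-(alpha i)))) * Psi q := by
      have hPq := congrArg Psi hq
      rw [map_sub, map_mul, map_sub, map_one, hPsi_single, hPsi_single, hPsi_single] at hPq
      exact hPq
    have hvu : (LinearMap.baseChange Q (Ti i) - tau i)
        * ((1 : Module.End Q (Q ⊗[AddMonoidAlgebra ℤ P] K))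
            - LinearMap.baseChange Q (Xop (-(alpha i)))) = 1 := by
      rw [hvrep i]
      exact Units.inv_mul _
    have ht : tau i = LinearMap.baseChange Q (Ti i)
        - (LinearMap.baseChange Q (Ti i) - tau i) := (sub_sub_cancel (LinearMap.baseChange Q (Ti i)) (tau i)).symm
    exact tau_comm (S := Module.End Q (Q ⊗[AddMonoidAlgebra ℤ P] K)) (htau i) hvu (hXcomm lam (-(alpha i)))
      (hXcomm (lam - wt.repr lam i • alpha i) (-(alpha i))) hcQ f5 ht
  -- eigen step
  have hEigStep : ∀ (w : W) (i : Fin n) (x : Q ⊗[AddMonoidAlgebra ℤ P] K),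
      (∀ lam, LinearMap.baseChange Q (Xop lam) x = ch w lam • x) →
      (∀ lam, LinearMap.baseChange Q (Xop lam) (tau i x)
          = ch (w * cs.simple i) lam • tau i x) := by
    intro w i x hx lam
    have h1 := LinearMap.congr_fun (hcomm i lam) x
    rw [Module.End.mul_apply, Module.End.mul_apply] at h1
    rw [h1, hx, map_smul, hch_mul]
  -- base case
  have hEig1 : ∀ lam, LinearMap.baseChange Q (Xop lam)
      ((1 : Q) ⊗ₜ[AddMonoidAlgebra ℤ P] O 1) = ch 1 lam • ((1 : Q) ⊗ₜ[AddMonoidAlgebra ℤ P] O 1) := by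
    intro lam
    have hs1 : Multiplicative.toAdd (sact (1 : W)) lam = lam := by rw [map_one]; rfl
    rw [LinearMap.baseChange_tmul, hXO1, TensorProduct.tmul_smul]
    simp only [hchdef]
    rw [hs1, algebraMap_smul]
  have hTri1 : B.repr ((1 : Q) ⊗ₜ[AddMonoidAlgebra ℤ P] O 1) (1 : W) = 1 ∧
      ∀ v : W, B.repr ((1 : Q) ⊗ₜ[AddMonoidAlgebra ℤ P] O 1) v ≠ 0 →
        v = 1 ∨ cs.length v < cs.length 1 := by
    have h1 : ((1 : Q) ⊗ₜ[AddMonoidAlgebra ℤ P] O 1) = B (1 : W) := (hBapp 1).symm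
    constructor
    · rw [h1, B.repr_self, Finsupp.single_apply, if_pos rfl]
    · intro v hv
      left
      by_contra hne
      rw [h1, B.repr_self, Finsupp.single_apply, if_neg (fun h => hne h.symm)] at hv
      exact hv rfl
  -- triangularity step
  have hTriStep : ∀ (w : W) (i : Fin n) (x : Q ⊗[AddMonoidAlgebra ℤ P] K),
      cs.length w < cs.length (w * cs.simple i) →
      (∀ lam, LinearMap.baseChange Q (Xop lam) x = ch w lam • x) →
      (B.repr x w = 1 ∧ ∀ v, B.repr x v ≠ 0 → v = w ∨ cs.length v < cs.length w) →
      (B.repr (tau i x) (w * cs.simple i) = 1 ∧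
        ∀ v, B.repr (tau i x) v ≠ 0 →
          v = w * cs.simple i ∨ cs.length v < cs.length (w * cs.simple i)) := by
    intro w i x hlen hE hT
    have hxne : x ≠ 0 := by
      intro h0
      have := hT.1
      rw [h0, map_zero, Finsupp.zero_apply] at this
      exact one_ne_zero this.symm
    set d : Q := 1 - ch w (-(alpha i)) with hd
    have hux : ((1 : Module.End Q (Q ⊗[AddMonoidAlgebra ℤ P] K))
        - LinearMap.baseChange Q (Xop (-(alpha i)))) x = d • x := by
      rw [LinearMap.sub_apply, Module.End.one_apply, hE, hd]
      have hs := sub_smul (1 : Q) (ch w (-(alpha i))) x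
      rw [one_smul] at hs
      exact hs.symm
    have hdne : d ≠ 0 := by
      intro h0
      have h1 : ((1 : Module.End Q (Q ⊗[AddMonoidAlgebra ℤ P] K))
          - LinearMap.baseChange Q (Xop (-(alpha i)))) x = 0 := by
        rw [hux, h0, zero_smul]
      apply hxne
      calc x = ((((hu i).unit⁻¹ : _ˣ) : Module.End Q (Q ⊗[AddMonoidAlgebra ℤ P] K))
            * ((hu i).unit : Module.End Q (Q ⊗[AddMonoidAlgebra ℤ P] K))) x := by
              rw [Units.inv_mul, Module.End.one_apply]
        _ = (((hu i).unit⁻¹ : _ˣ) : Module.End Q (Q ⊗[AddMonoidAlgebra ℤ P] K))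
            (((hu i).unit : Module.End Q (Q ⊗[AddMonoidAlgebra ℤ P] K)) x) := by
              rw [Module.End.mul_apply]
        _ = 0 := by rw [(hu i).unit_spec, h1, map_zero]
    have hvx : (LinearMap.baseChange Q (Ti i) - tau i) x = d⁻¹ • x := by
      have h1 : ((hu i).unit : Module.End Q (Q ⊗[AddMonoidAlgebra ℤ P] K)) (d⁻¹ • x) = x := by
        rw [(hu i).unit_spec, map_smul, hux, smul_smul, inv_mul_cancel₀ hdne, one_smul]
      rw [hvrep i]
      calc (((hu i).unit⁻¹ : _ˣ) : Module.End Q (Q ⊗[AddMonoidAlgebra ℤ P] K)) x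
          = (((hu i).unit⁻¹ : _ˣ) : Module.End Q (Q ⊗[AddMonoidAlgebra ℤ P] K))
            (((hu i).unit : Module.End Q (Q ⊗[AddMonoidAlgebra ℤ P] K)) (d⁻¹ • x)) := by rw [h1]
        _ = ((((hu i).unit⁻¹ : _ˣ) : Module.End Q (Q ⊗[AddMonoidAlgebra ℤ P] K))
            * ((hu i).unit : Module.End Q (Q ⊗[AddMonoidAlgebra ℤ P] K))) (d⁻¹ • x) := by
              rw [Module.End.mul_apply]
        _ = d⁻¹ • x := by rw [Units.inv_mul, Module.End.one_apply]
    have htx : tau i x = LinearMap.baseChange Q (Ti i) x - d⁻¹ • x := by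
      have h1 : tau i x = LinearMap.baseChange Q (Ti i) x
          - (LinearMap.baseChange Q (Ti i) - tau i) x := by
        rw [LinearMap.sub_apply]; abel
      rw [h1, hvx]
    set ta : W → W := fun v =>
      if cs.length v < cs.length (v * cs.simple i) then v * cs.simple i else v with htadef
    have hTB : ∀ v : W, LinearMap.baseChange Q (Ti i) (B v) = B (ta v) := by
      intro v
      rw [hBapp v, LinearMap.baseChange_tmul, hTi i v]
      simp only [htadef]
      by_cases hc : cs.length v < cs.length (v * cs.simple i)
      · rw [if_pos hc, if_pos hc, hBapp]
      · rw [if_neg hc, if_neg hc, hBapp]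
    have hcoefT : ∀ u : W, B.repr (LinearMap.baseChange Q (Ti i) x) u
        = ∑ v : W, B.repr x v * (if ta v = u then 1 else 0) := by
      intro u
      have hTx : LinearMap.baseChange Q (Ti i) x = ∑ v : W, B.repr x v • B (ta v) := by
        conv_lhs => rw [← B.sum_repr x]
        rw [map_sum]
        exact Finset.sum_congr rfl fun v _ => by rw [map_smul, hTB]
      rw [hTx, map_sum, Finsupp.finset_sum_apply]
      refine Finset.sum_congr rfl fun v _ => ?_
      rw [map_smul, B.repr_self, Finsupp.smul_apply, Finsupp.single_apply, smul_eq_mul]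
    have hcoef : ∀ u : W, B.repr (tau i x) u
        = (∑ v : W, B.repr x v * (if ta v = u then 1 else 0)) - d⁻¹ * B.repr x u := by
      intro u
      rw [htx, map_sub, map_smul, Finsupp.sub_apply, Finsupp.smul_apply, hcoefT, smul_eq_mul]
    have hlen1 : cs.length (w * cs.simple i) = cs.length w + 1 := by
      refine (cs.not_isRightDescent_iff).mp ?_
      intro hdes
      exact absurd hdes (by unfold CoxeterSystem.IsRightDescent; omega)
    have hta_w : ta w = w * cs.simple i := by rw [htadef]; exact if_pos hlen
    have hta_le : ∀ v : W, cs.length (ta v) ≤ cs.length v + 1 := by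
      intro v
      simp only [htadef]
      by_cases hc : cs.length v < cs.length (v * cs.simple i)
      · rw [if_pos hc]
        rcases cs.length_mul_simple v i with h | h <;> omega
      · rw [if_neg hc]; omega
    have hrx_ws : B.repr x (w * cs.simple i) = 0 := by
      by_contra h0
      rcases hT.2 _ h0 with h1 | h1
      · have := congrArg cs.length h1
        omega
      · omega
    have hsum_ws : ∑ v : W, B.repr x v * (if ta v = w * cs.simple i then 1 else 0) = 1 := by
      rw [Finset.sum_eq_single w]
      · rw [hT.1, hta_w, if_pos rfl, one_mul]
      · intro v _ hv
        rcases eq_or_ne (B.repr x v) 0 with h0 | h0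
        · rw [h0, zero_mul]
        · rcases hT.2 v h0 with rfl | h1
          · exact absurd rfl hv
          · have hne : ta v ≠ w * cs.simple i := by
              simp only [htadef]
              by_cases hc : cs.length v < cs.length (v * cs.simple i)
              · rw [if_pos hc]
                intro he
                exact hv (mul_right_cancel he)
              · rw [if_neg hc]
                intro he
                rw [he] at h1
                omega
            rw [if_neg hne, mul_zero]
      · intro h; exact absurd (Finset.mem_univ w) h
    constructor
    · rw [hcoef, hsum_ws, hrx_ws, mul_zero, sub_zero]
    · intro u hu0
      by_cases hcase : u = w * cs.simple i
      · exact Or.inl hcase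
      right
      rw [hcoef] at hu0
      have hor : (∑ v : W, B.repr x v * (if ta v = u then 1 else 0)) ≠ 0 ∨ B.repr x u ≠ 0 := by
        by_contra hb
        push_neg at hb
        rw [hb.1, hb.2, mul_zero, sub_zero] at hu0
        exact hu0 rfl
      rcases hor with hS | hr
      · obtain ⟨v, -, hv⟩ := Finset.exists_ne_zero_of_sum_ne_zero hS
        have hrv : B.repr x v ≠ 0 := fun h => hv (by rw [h, zero_mul])
        have htv : ta v = u := by
          by_contra h
          rw [if_neg h, mul_zero] at hv
          exact hv rfl
        rcases hT.2 v hrv with hvw | h1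
        · rw [hvw, hta_w] at htv
          exact absurd htv.symm hcase
        · have := hta_le v
          rw [htv] at this
          omega
      · rcases hT.2 u hr with rfl | h1
        · omega
        · omega
  -- main existence and uniqueness
  set Good : W → (Q ⊗[AddMonoidAlgebra ℤ P] K) → Prop := fun w x =>
    (∀ lam, LinearMap.baseChange Q (Xop lam) x = ch w lam • x) ∧
    (B.repr x w = 1 ∧ ∀ v, B.repr x v ≠ 0 → v = w ∨ cs.length v < cs.length w) with hGooddef
  have hGood1 : Good 1 ((1 : Q) ⊗ₜ[AddMonoidAlgebra ℤ P] O 1) := ⟨hEig1, hTri1⟩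
  have hGoodStep : ∀ (w : W) (i : Fin n) (x : Q ⊗[AddMonoidAlgebra ℤ P] K),
      cs.length w < cs.length (w * cs.simple i) → Good w x → Good (w * cs.simple i) (tau i x) :=
    fun w i x hlen hx => ⟨hEigStep w i x hx.1, hTriStep w i x hlen hx.1 hx.2⟩
  have hGoodne : ∀ (w : W) (x : Q ⊗[AddMonoidAlgebra ℤ P] K), Good w x → x ≠ 0 := by
    intro w x hx h0
    have := hx.2.1
    rw [h0, map_zero, Finsupp.zero_apply] at this
    exact one_ne_zero this.symm
  have main : ∀ N : ℕ, ∀ w : W, cs.length w ≤ N →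
      ∃! x : Q ⊗[AddMonoidAlgebra ℤ P] K, Good w x := by
    intro N
    induction N using Nat.strong_induction_on with
    | _ N IH =>
      intro w hw
      -- choice of solutions for shorter elements
      set xx : W → Q ⊗[AddMonoidAlgebra ℤ P] K := fun v =>
        if h : cs.length v < cs.length w then (IH (cs.length v) (by omega) v le_rfl).choose
        else 0 with hxxdef
      have hxxGood : ∀ v : W, cs.length v < cs.length w → Good v (xx v) := by
        intro v hv
        simp only [hxxdef]
        rw [dif_pos hv]
        exact (IH (cs.length v) (by omega) v le_rfl).choose_spec.1
      -- uniqueness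
      have huniq : ∀ x y : Q ⊗[AddMonoidAlgebra ℤ P] K, Good w x → Good w y → x = y := by
        intro x y hx hy
        have hzeig : ∀ lam, LinearMap.baseChange Q (Xop lam) (x - y) = ch w lam • (x - y) := by
          intro lam
          rw [map_sub, hx.1, hy.1, smul_sub]
        have hzrep : ∀ v, B.repr (x - y) v ≠ 0 → cs.length v < cs.length w := by
          intro v hv
          rw [map_sub, Finsupp.sub_apply] at hv
          by_contra hge
          rcases eq_or_ne v w with rfl | hne
          · rw [hx.2.1, hy.2.1, sub_self] at hv
            exact hv rfl
          · have hx0 : B.repr x v = 0 := by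
              by_contra h0
              rcases hx.2.2 v h0 with h | h
              · exact hne h
              · exact hge h
            have hy0 : B.repr y v = 0 := by
              by_contra h0
              rcases hy.2.2 v h0 with h | h
              · exact hne h
              · exact hge h
            rw [hx0, hy0, sub_self] at hv
            exact hv rfl
        have hS : ∀ v : W, cs.length v < cs.length w →
            B v ∈ Submodule.span Q (xx '' {v : W | cs.length v < cs.length w}) := by
          intro v hv
          refine tri_span B cs.length xx {v : W | cs.length v < cs.length w} ?_ ?_ ?_ v hv
          · intro a ha j hj
            exact lt_trans hj ha
          · intro a ha
            exact (hxxGood a ha).2.1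
          · intro a ha j hj
            exact (hxxGood a ha).2.2 j hj
        have hzmem : x - y ∈ Submodule.span Q (xx '' {v : W | cs.length v < cs.length w}) := by
          rw [← B.sum_repr (x - y)]
          apply Submodule.sum_mem
          intro v _
          rcases eq_or_ne (B.repr (x - y) v) 0 with h0 | h0
          · rw [h0, zero_smul]
            exact Submodule.zero_mem _
          · exact Submodule.smul_mem _ _ (hS v (hzrep v h0))
        set g : W → Q ⊗[AddMonoidAlgebra ℤ P] K := fun v =>
          if cs.length v < cs.length w then xx v else 0 with hgdef
        have himg : xx '' {v : W | cs.length v < cs.length w} ⊆ Set.range g := by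
          rintro _ ⟨v, hv, rfl⟩
          have hv' : cs.length v < cs.length w := hv
          refine ⟨v, ?_⟩
          simp only [hgdef]
          rw [if_pos hv']
        have hzmem' : x - y ∈ Submodule.span Q (Set.range g) :=
          Submodule.span_mono himg hzmem
        obtain ⟨c, hc⟩ := (Submodule.mem_span_range_iff_exists_fun Q).mp hzmem'
        have hgeig : ∀ v : W, ∀ lam, LinearMap.baseChange Q (Xop lam) (g v) = ch v lam • g v := by
          intro v lam
          simp only [hgdef]
          by_cases hv : cs.length v < cs.length w
          · rw [if_pos hv]
            exact (hxxGood v hv).1 lam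
          · rw [if_neg hv, map_zero, smul_zero]
        set S' : Finset W := Finset.univ.filter (fun v => cs.length v < cs.length w) with hS'def
        have hmemS' : ∀ v : W, v ∈ S' ↔ cs.length v < cs.length w := by
          intro v
          simp only [hS'def, Finset.mem_filter, Finset.mem_univ, true_and]
        have hkey : ∀ lam : P, ∑ v ∈ S', (c v * (ch v lam - ch w lam)) • xx v = 0 := by
          intro lam
          have h1 : ∑ v : W, (c v * ch v lam) • g v = ch w lam • (x - y) := by
            rw [← hzeig lam, ← hc, map_sum]
            refine Finset.sum_congr rfl fun v _ => ?_
            rw [map_smul, hgeig v lam, smul_smul]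
          have h2 : ∑ v : W, (ch w lam * c v) • g v = ch w lam • (x - y) := by
            rw [← hc, Finset.smul_sum]
            refine Finset.sum_congr rfl fun v _ => ?_
            rw [smul_smul]
          have h3 : ∑ v : W, (c v * (ch v lam - ch w lam)) • g v = 0 := by
            have hterm : ∀ v ∈ (Finset.univ : Finset W), (c v * (ch v lam - ch w lam)) • g v
                = (c v * ch v lam) • g v - (ch w lam * c v) • g v := by
              intro v _
              refine Eq.trans ?_ (sub_smul _ _ _)
              congr 1
              ring
            rw [Finset.sum_congr rfl hterm, Finset.sum_sub_distrib, h1, h2, sub_self]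
          have h4 : ∑ v ∈ S', (c v * (ch v lam - ch w lam)) • g v = 0 := by
            rw [← h3]
            refine Finset.sum_subset (Finset.subset_univ S') ?_
            intro v _ hv
            have hnv : ¬ cs.length v < cs.length w := fun h => hv ((hmemS' v).mpr h)
            simp only [hgdef]
            rw [if_neg hnv, smul_zero]
          rw [← h4]
          refine Finset.sum_congr rfl fun v hv => ?_
          simp only [hgdef]
          rw [if_pos ((hmemS' v).mp hv)]
        have hc0 : ∀ v ∈ S', c v = 0 := by
          intro v hv
          have hvS : cs.length v < cs.length w := (hmemS' v).mp hv
          have hvne : v ≠ w := by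
            intro h
            rw [h] at hvS
            omega
          obtain ⟨lam, hlam⟩ := hchd v w hvne
          have hz := eig_indep (fun lam => LinearMap.baseChange Q (Xop lam)) ch xx S'
            (fun a ha lam => (hxxGood a ((hmemS' a).mp ha)).1 lam)
            (fun a ha => hGoodne a (xx a) (hxxGood a ((hmemS' a).mp ha)))
            (fun a _ b2 _ hab => hchd a b2 hab)
            (fun v => c v * (ch v lam - ch w lam)) (hkey lam) v hv
          rcases mul_eq_zero.mp hz with h | h
          · exact h
          · exact absurd (sub_eq_zero.mp h) hlam
        have hz0 : x - y = 0 := by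
          rw [← hc]
          apply Finset.sum_eq_zero
          intro v _
          by_cases hv : cs.length v < cs.length w
          · rw [hc0 v ((hmemS' v).mpr hv), zero_smul]
          · simp only [hgdef]
            rw [if_neg hv, smul_zero]
        exact sub_eq_zero.mp hz0
      -- existence
      rcases eq_or_ne w 1 with rfl | hne
      · exact ⟨(1 : Q) ⊗ₜ[AddMonoidAlgebra ℤ P] O 1, hGood1,
          fun y hy => huniq y _ hy hGood1⟩
      · obtain ⟨i, hi⟩ := cs.exists_rightDescent_of_ne_one hne
        have hlen' : cs.length (w * cs.simple i) < cs.length w := hi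
        have hww : (w * cs.simple i) * cs.simple i = w := by
          rw [mul_assoc, cs.simple_mul_simple_self, mul_one]
        have hlen'' : cs.length (w * cs.simple i)
            < cs.length ((w * cs.simple i) * cs.simple i) := by
          rw [hww]
          exact hlen'
        obtain ⟨x', hx', -⟩ := IH (cs.length (w * cs.simple i)) (by omega) (w * cs.simple i) le_rfl
        have hgood : Good w (tau i x') := by
          have hstep := hGoodStep (w * cs.simple i) i x' hlen'' hx'
          rwa [hww] at hstep
        exact ⟨tau i x', hgood, fun y hy => huniq y _ hy hgood⟩
  -- assemble the family
  have main1 : ∀ w : W, ∃! x : Q ⊗[AddMonoidAlgebra ℤ P] K, Good w x :=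
    fun w => main (cs.length w) w le_rfl
  refine ⟨fun w => (main1 w).choose, ?_, ?_, ?_, ?_, ?_⟩
  · exact ((main1 1).choose_spec.2 _ hGood1).symm
  · intro w i hlt
    exact ((main1 (w * cs.simple i)).choose_spec.2 _
      (hGoodStep w i _ hlt (main1 w).choose_spec.1)).symm
  · exact fun w lam => ((main1 w).choose_spec.1).1 lam
  · rw [linearIndependent_iff']
    intro s gg hg
    exact eig_indep (fun lam => LinearMap.baseChange Q (Xop lam)) ch
      (fun w => (main1 w).choose) s
      (fun a _ lam => ((main1 a).choose_spec.1).1 lam)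
      (fun a _ => hGoodne a _ (main1 a).choose_spec.1)
      (fun a _ b2 _ hab => hchd a b2 hab) gg hg
  · have hspan : ∀ v : W, B v ∈ Submodule.span Q ((fun w => (main1 w).choose) '' Set.univ) := by
      intro v
      refine tri_span B cs.length (fun w => (main1 w).choose) Set.univ ?_ ?_ ?_ v trivial
      · intro a _ j _
        trivial
      · intro a _
        exact ((main1 a).choose_spec.1).2.1
      · intro a _ j hj
        exact ((main1 a).choose_spec.1).2.2 j hj
    rw [Set.image_univ] at hspan
    rw [eq_top_iff, ← B.span_eq, Submodule.span_le]
    rintro _ ⟨v, rfl⟩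
    exact hspan v
end
end

section
/- In K_T(G/B) for the root system of type A_2, the Schubert class products [s_1 s_2][s_2 s_1] = −[O_{X_1}] + [O_{X_{s_1}}] + [O_{X_{s_2}}] and [s_2 s_1]² = e^{−α_1}[O_{X_{s_1}}] − (e^{−α_1} − 1)[O_{X_{s_2 s_1}}] hold, where [w] denotes [O_{X_w}]. -/
open scoped Classical TensorProduct

noncomputable section

namespace SchubertA2Aux

variable {P : Type*} [AddCommGroup P]

lemma amal_id (lam a : P) :
    (AddMonoidAlgebra.single lam 1 : AddMonoidAlgebra ℤ P)
      - AddMonoidAlgebra.single (lam + a) 1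
    = (1 - AddMonoidAlgebra.single (-a) 1) * AddMonoidAlgebra.single (lam + a) (-1) := by
  rw [sub_mul, one_mul, AddMonoidAlgebra.single_mul_single]
  have e2 : -a + (lam + a) = lam := by abel
  rw [e2]
  norm_num [Finsupp.single_neg]
  abel

lemma kill_smul {K : Type*} [AddCommGroup K] [Module (AddMonoidAlgebra ℤ P) K]
    (mu : P) (z : K) :
    (-(AddMonoidAlgebra.single (-mu) 1 : AddMonoidAlgebra ℤ P))
        • ((AddMonoidAlgebra.single mu 1 : AddMonoidAlgebra ℤ P) • z) = -z := by
  rw [neg_smul, smul_smul, AddMonoidAlgebra.single_mul_single, neg_add_cancel, one_mul,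
    ← AddMonoidAlgebra.one_def, one_smul]

end SchubertA2Aux

set_option maxHeartbeats 1000000 in
/-- In `K_T(G/B)` for the root system of type `A_2` (Coxeter matrix
with `m_{12} = 3`, Cartan matrix `(2, −1; −1, 2)`), the Schubert class products
`[s_1s_2][s_2s_1] = −[O_{X_1}] + [O_{X_{s_1}}] + [O_{X_{s_2}}]` and
`[s_2s_1]² = e^{−α_1}[O_{X_{s_1}}] − (e^{−α_1} − 1)[O_{X_{s_2s_1}}]`
hold, where `[w] = [O_{X_w}]` and multiplication is the ring structure of
`K_T(G/B)` with identity `[O_{X_{w_0}}]`. -/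
theorem schubert_products_A2
    {W : Type*} [Group W] [Fintype W]
    (M : CoxeterMatrix (Fin 2)) (cs : CoxeterSystem M W)
    {P : Type*} [AddCommGroup P]
    (wt : Module.Basis (Fin 2) ℤ P) (alpha : Fin 2 → P)
    (sact : W →* Multiplicative (AddAut P))
    (hact : ∀ (i : Fin 2) (lam : P),
      Multiplicative.toAdd (sact (cs.simple i)) lam = lam - wt.repr lam i • alpha i)
    (hcart : ∀ i, wt.repr (alpha i) i = 2)
    (hinj : Function.Injective sact)
    (K : Type*) [AddCommGroup K] [Module (AddMonoidAlgebra ℤ P) K]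
    (O : W → K)
    (hbasis : ∃ b : Module.Basis W (AddMonoidAlgebra ℤ P) K, ∀ w, b w = O w)
    (Ti : Fin 2 → Module.End (AddMonoidAlgebra ℤ P) K)
    (hTi : ∀ (i : Fin 2) (w : W), Ti i (O w) =
      if cs.length w < cs.length (w * cs.simple i) then O (w * cs.simple i) else O w)
    (Xop : P → Module.End (AddMonoidAlgebra ℤ P) K)
    (hXadd : ∀ lam mu, Xop (lam + mu) = Xop lam * Xop mu)
    (hX0 : Xop 0 = 1)
    (hXO1 : ∀ lam, Xop lam (O 1) = (AddMonoidAlgebra.single lam 1 : AddMonoidAlgebra ℤ P) • O 1)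
    (hcross : ∀ (i : Fin 2) (lam : P) (q : AddMonoidAlgebra ℤ P),
      ((AddMonoidAlgebra.single lam 1 : AddMonoidAlgebra ℤ P)
          - AddMonoidAlgebra.single (lam - wt.repr lam i • alpha i) 1
        = (1 - AddMonoidAlgebra.single (-(alpha i)) 1) * q) →
      Xop lam * Ti i = Ti i * Xop (lam - wt.repr lam i • alpha i)
        + q.coeff.sum (fun mu c => c • Xop mu))
    (hA2 : M.M 0 1 = 3)
    (hcartan : ∀ i j : Fin 2, wt.repr (alpha i) j = if i = j then 2 else -1)
    (w0 : W) (hw0 : ∀ w : W, cs.length w ≤ cs.length w0)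
    (mul : K → K → K)
    (hmul_comm : ∀ x y, mul x y = mul y x)
    (hmul_one : ∀ x, mul (O w0) x = x)
    (hmul_add : ∀ x y z, mul (x + y) z = mul x z + mul y z)
    (hmul_smul : ∀ (r : AddMonoidAlgebra ℤ P) (x y : K),
      mul (r • x) y = r • mul x y)
    (hmul_X : ∀ (lam : P) (x y : K), mul (Xop lam x) y = Xop lam (mul x y)) :
    mul (O (cs.simple 0 * cs.simple 1)) (O (cs.simple 1 * cs.simple 0))
        = - O 1 + O (cs.simple 0) + O (cs.simple 1) ∧
    mul (O (cs.simple 1 * cs.simple 0)) (O (cs.simple 1 * cs.simple 0))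
        = (AddMonoidAlgebra.single (-(alpha 0)) 1 : AddMonoidAlgebra ℤ P) •
            O (cs.simple 0)
          - ((AddMonoidAlgebra.single (-(alpha 0)) 1 : AddMonoidAlgebra ℤ P) - 1) •
            O (cs.simple 1 * cs.simple 0) := by
  
  classical
  obtain ⟨hact0, hact1⟩ : (∀ lam : P, Multiplicative.toAdd (sact (cs.simple 0)) lam = lam - wt.repr lam 0 • alpha 0)
      ∧ (∀ lam : P, Multiplicative.toAdd (sact (cs.simple 1)) lam = lam - wt.repr lam 1 • alpha 1) :=
    ⟨hact 0, hact 1⟩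
  -- basic repr values
  have hr00 : wt.repr (wt 0) 0 = 1 := by simp [Module.Basis.repr_self]
  have hr01 : wt.repr (wt 0) 1 = 0 := by
    rw [Module.Basis.repr_self]; simp [Finsupp.single_apply]
  have hr10 : wt.repr (wt 1) 0 = 0 := by
    rw [Module.Basis.repr_self]; simp [Finsupp.single_apply]
  have hr11 : wt.repr (wt 1) 1 = 1 := by simp [Module.Basis.repr_self]
  have hca00 : wt.repr (alpha 0) 0 = 2 := by rw [hcartan, if_pos rfl]
  have hca01 : wt.repr (alpha 0) 1 = -1 := by rw [hcartan, if_neg (by decide)]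
  have hca10 : wt.repr (alpha 1) 0 = -1 := by rw [hcartan, if_neg (by decide)]
  have hca11 : wt.repr (alpha 1) 1 = 2 := by rw [hcartan, if_pos rfl]
  have hrsub : ∀ (x y : P) (i : Fin 2), wt.repr (x - y) i = wt.repr x i - wt.repr y i := by
    intro x y i; rw [map_sub]; rfl
  have hrneg : ∀ (x : P) (i : Fin 2), wt.repr (-x) i = -wt.repr x i := by
    intro x i; rw [map_neg]; rfl
  have hradd : ∀ (x y : P) (i : Fin 2), wt.repr (x + y) i = wt.repr x i + wt.repr y i := by
    intro x y i; rw [map_add]; rfl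
  -- alpha in terms of the weight basis
  have ha0 : alpha 0 = (2 : ℤ) • wt 0 + (-1 : ℤ) • wt 1 := by
    have h := wt.sum_repr (alpha 0)
    rw [Fin.sum_univ_two, hca00, hca01] at h
    exact h.symm
  have ha1 : alpha 1 = (-1 : ℤ) • wt 0 + (2 : ℤ) • wt 1 := by
    have h := wt.sum_repr (alpha 1)
    rw [Fin.sum_univ_two, hca10, hca11] at h
    exact h.symm
  -- repr values of the weights we use
  have rA : wt.repr (wt 0 - wt 1) 1 = -1 := by rw [hrsub, hr01, hr11]; norm_num
  have rB : wt.repr (-wt 0) 0 = -1 := by rw [hrneg, hr00]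
  have rC : wt.repr (wt 1 - wt 0) 0 = -1 := by rw [hrsub, hr10, hr00]; norm_num
  have rD : wt.repr (-wt 1) 1 = -1 := by rw [hrneg, hr11]
  have rE : wt.repr (-wt 1) 0 = 0 := by rw [hrneg, hr10]; norm_num
  -- P-arithmetic
  have p1 : (wt 0 - wt 1) + alpha 1 = wt 1 := by rw [ha1]; abel
  have p2 : (-wt 0) + alpha 0 = wt 0 - wt 1 := by rw [ha0]; abel
  have p3 : (wt 1 - wt 0) + alpha 0 = wt 0 := by rw [ha0]; abel
  have p4 : (-wt 1) + alpha 1 = wt 1 - wt 0 := by rw [ha1]; abel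
  have pneg : (-wt 0) + (wt 1 - wt 0) = -(alpha 0) := by rw [ha0]; abel
  -- simple reflections are distinct
  have hne01 : cs.simple 0 ≠ cs.simple 1 := by
    intro h
    have h1 : Multiplicative.toAdd (sact (cs.simple 0)) (wt 0) = Multiplicative.toAdd (sact (cs.simple 1)) (wt 0) := by rw [h]
    rw [hact0, hact1, hr00, hr01, one_smul, zero_smul, sub_zero] at h1
    have h3 : alpha 0 = 0 := sub_eq_self.mp h1
    have h4 := hca00
    rw [h3] at h4
    simp at h4
  -- lengths
  have hlen1 : cs.length (cs.simple 0 * cs.simple 1) = 2 := by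
    have hle : cs.length (cs.simple 0 * cs.simple 1) ≤ 2 := by
      have h := cs.length_mul_le (cs.simple 0) (cs.simple 1)
      rwa [cs.length_simple, cs.length_simple] at h
    have hmod : cs.length (cs.simple 0 * cs.simple 1) % 2 = 0 := by
      have h := cs.length_mul_mod_two (cs.simple 0) (cs.simple 1)
      rwa [cs.length_simple, cs.length_simple] at h
    have hne : cs.length (cs.simple 0 * cs.simple 1) ≠ 0 := by
      rw [Ne, cs.length_eq_zero_iff]
      intro h
      have h2 := mul_eq_one_iff_eq_inv.mp h
      rw [cs.inv_simple] at h2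
      exact hne01 h2
    omega
  have hlen1' : cs.length (cs.simple 1 * cs.simple 0) = 2 := by
    have hle : cs.length (cs.simple 1 * cs.simple 0) ≤ 2 := by
      have h := cs.length_mul_le (cs.simple 1) (cs.simple 0)
      rwa [cs.length_simple, cs.length_simple] at h
    have hmod : cs.length (cs.simple 1 * cs.simple 0) % 2 = 0 := by
      have h := cs.length_mul_mod_two (cs.simple 1) (cs.simple 0)
      rwa [cs.length_simple, cs.length_simple] at h
    have hne : cs.length (cs.simple 1 * cs.simple 0) ≠ 0 := by
      rw [Ne, cs.length_eq_zero_iff]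
      intro h
      have h2 := mul_eq_one_iff_eq_inv.mp h
      rw [cs.inv_simple] at h2
      exact hne01 h2.symm
    omega
  have hlen3 : cs.length (cs.simple 0 * cs.simple 1 * cs.simple 0) = 3 := by
    have hle : cs.length (cs.simple 0 * cs.simple 1 * cs.simple 0) ≤ 3 := by
      have h := cs.length_mul_le (cs.simple 0 * cs.simple 1) (cs.simple 0)
      rwa [hlen1, cs.length_simple] at h
    have hmod : cs.length (cs.simple 0 * cs.simple 1 * cs.simple 0) % 2 = 1 := by
      have h := cs.length_mul_mod_two (cs.simple 0 * cs.simple 1) (cs.simple 0)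
      rwa [hlen1, cs.length_simple] at h
    have hne1 : cs.length (cs.simple 0 * cs.simple 1 * cs.simple 0) ≠ 1 := by
      rw [Ne, cs.length_eq_one_iff]
      rintro ⟨i, hi⟩
      fin_cases i
      · -- s0 s1 s0 = s0 : contradiction with length of s1 s0
        replace hi : cs.simple 0 * cs.simple 1 * cs.simple 0 = cs.simple 0 := by
          simpa using hi
        have h2 : cs.simple 1 * cs.simple 0 = 1 := by
          have h3 : cs.simple 0 * (cs.simple 0 * cs.simple 1 * cs.simple 0)
              = cs.simple 0 * cs.simple 0 := by rw [hi]
          calc cs.simple 1 * cs.simple 0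
              = cs.simple 0 * (cs.simple 0 * cs.simple 1 * cs.simple 0) := by
                rw [← mul_assoc, ← mul_assoc, cs.simple_mul_simple_self, one_mul]
            _ = cs.simple 0 * cs.simple 0 := h3
            _ = 1 := cs.simple_mul_simple_self 0
        have h4 := cs.length_eq_zero_iff.mpr h2
        rw [hlen1'] at h4
        norm_num at h4
      · -- s0 s1 s0 = s1 : contradiction via the action on P
        replace hi : cs.simple 0 * cs.simple 1 * cs.simple 0 = cs.simple 1 := by
          simpa using hi
        have step1 : Multiplicative.toAdd (sact (cs.simple 0)) (wt 0) = wt 0 - alpha 0 := by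
          rw [hact0, hr00, one_smul]
        have step2 : Multiplicative.toAdd (sact (cs.simple 1)) (wt 0 - alpha 0) = wt 0 - alpha 0 - alpha 1 := by
          rw [hact1, hrsub, hr01, hca01]
          norm_num
        have step3 : Multiplicative.toAdd (sact (cs.simple 0)) (wt 0 - alpha 0 - alpha 1) = wt 0 - alpha 0 - alpha 1 := by
          rw [hact0, hrsub, hrsub, hr00, hca00, hca10]
          norm_num
        have hrhs : Multiplicative.toAdd (sact (cs.simple 1)) (wt 0) = wt 0 := by
          rw [hact1, hr01, zero_smul, sub_zero]
        have h1 : Multiplicative.toAdd (sact (cs.simple 0 * cs.simple 1 * cs.simple 0)) (wt 0)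
            = Multiplicative.toAdd (sact (cs.simple 1)) (wt 0) := by rw [hi]
        rw [map_mul (f := sact), map_mul (f := sact)] at h1
        have h2 : Multiplicative.toAdd (sact (cs.simple 0)) (Multiplicative.toAdd (sact (cs.simple 1)) (Multiplicative.toAdd (sact (cs.simple 0)) (wt 0)))
            = Multiplicative.toAdd (sact (cs.simple 1)) (wt 0) := h1
        rw [step1, step2, step3, hrhs] at h2
        have h3 : alpha 0 + alpha 1 = 0 := by
          have h4 : wt 0 - (alpha 0 + alpha 1) = wt 0 := by rw [← sub_sub]; exact h2
          exact sub_eq_self.mp h4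
        have h5 : wt.repr (alpha 0 + alpha 1) 0 = 0 := by rw [h3]; simp
        rw [hradd, hca00, hca10] at h5
        norm_num at h5
    omega

  -- group identities: squares and the braid relation
  have hsq0 : cs.simple 0 * cs.simple 0 = 1 := cs.simple_mul_simple_self 0
  have hsq1 : cs.simple 1 * cs.simple 1 = 1 := cs.simple_mul_simple_self 1
  have hpow : (cs.simple 0 * cs.simple 1) ^ 3 = 1 := by
    have h := cs.simple_mul_simple_pow 0 1
    rwa [hA2] at h
  have hbraid : cs.simple 0 * cs.simple 1 * cs.simple 0
      = cs.simple 1 * cs.simple 0 * cs.simple 1 := by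
    have h1 : (cs.simple 0 * cs.simple 1 * cs.simple 0)
        * (cs.simple 1 * cs.simple 0 * cs.simple 1) = (cs.simple 0 * cs.simple 1) ^ 3 := by
      simp [pow_succ, mul_assoc]
    rw [hpow] at h1
    have h2 := mul_eq_one_iff_eq_inv.mp h1
    rw [h2]
    simp [mul_inv_rev, cs.inv_simple, mul_assoc]
  have c0 : ∀ w : W, cs.simple 0 * (cs.simple 0 * w) = w :=
    fun w => cs.simple_mul_simple_cancel_left 0
  have c1 : ∀ w : W, cs.simple 1 * (cs.simple 1 * w) = w :=
    fun w => cs.simple_mul_simple_cancel_left 1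
  have br : cs.simple 1 * (cs.simple 0 * cs.simple 1)
      = cs.simple 0 * (cs.simple 1 * cs.simple 0) := by
    rw [← mul_assoc, ← hbraid, mul_assoc]
  have br' : ∀ w : W, cs.simple 1 * (cs.simple 0 * (cs.simple 1 * w))
      = cs.simple 0 * (cs.simple 1 * (cs.simple 0 * w)) := by
    intro w
    have h := congrArg (· * w) br
    simpa [mul_assoc] using h
  -- every element of W is one of the six listed elements
  have hmem : ∀ w : W, w = 1 ∨ w = cs.simple 0 ∨ w = cs.simple 1
      ∨ w = cs.simple 0 * cs.simple 1 ∨ w = cs.simple 1 * cs.simple 0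
      ∨ w = cs.simple 0 * cs.simple 1 * cs.simple 0 := by
    intro w
    have hw : w ∈ Subgroup.closure (Set.range cs.simple) := by
      rw [cs.subgroup_closure_range_simple]; trivial
    refine Subgroup.closure_induction ?_ ?_ ?_ ?_ hw
    · rintro x ⟨i, rfl⟩
      fin_cases i
      · tauto
      · tauto
    · tauto
    · rintro x y _ _ (rfl|rfl|rfl|rfl|rfl|rfl) (rfl|rfl|rfl|rfl|rfl|rfl) <;>
        simp [mul_assoc, hsq0, hsq1, c0, c1, br, br']
    · rintro x _ (rfl|rfl|rfl|rfl|rfl|rfl) <;>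
        simp [mul_inv_rev, cs.inv_simple, mul_assoc, hsq0, hsq1, c0, c1, br, br']
  -- identification of the longest element
  have hw0eq : w0 = cs.simple 0 * cs.simple 1 * cs.simple 0 := by
    have hge : 3 ≤ cs.length w0 := by
      have h := hw0 (cs.simple 0 * cs.simple 1 * cs.simple 0)
      rwa [hlen3] at h
    rcases hmem w0 with h|h|h|h|h|h
    · rw [h, cs.length_one] at hge; omega
    · rw [h, cs.length_simple] at hge; omega
    · rw [h, cs.length_simple] at hge; omega
    · rw [h, hlen1] at hge; omega
    · rw [h, hlen1'] at hge; omega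
    · exact h
  have hone : ∀ x : K, mul (O (cs.simple 0 * cs.simple 1 * cs.simple 0)) x = x := by
    intro x
    rw [← hw0eq]
    exact hmul_one x
  -- Demazure operator values on the basis
  have hT0_1 : Ti 0 (O 1) = O (cs.simple 0) := by
    have hc : cs.length (1 : W) < cs.length (1 * cs.simple 0) := by
      rw [one_mul, cs.length_one, cs.length_simple]; norm_num
    rw [hTi, if_pos hc, one_mul]
  have hT1_1 : Ti 1 (O 1) = O (cs.simple 1) := by
    have hc : cs.length (1 : W) < cs.length (1 * cs.simple 1) := by
      rw [one_mul, cs.length_one, cs.length_simple]; norm_num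
    rw [hTi, if_pos hc, one_mul]
  have hT0_s0 : Ti 0 (O (cs.simple 0)) = O (cs.simple 0) := by
    have hc : ¬ cs.length (cs.simple 0) < cs.length (cs.simple 0 * cs.simple 0) := by
      rw [hsq0, cs.length_one, cs.length_simple]; norm_num
    rw [hTi, if_neg hc]
  have hT1_s1 : Ti 1 (O (cs.simple 1)) = O (cs.simple 1) := by
    have hc : ¬ cs.length (cs.simple 1) < cs.length (cs.simple 1 * cs.simple 1) := by
      rw [hsq1, cs.length_one, cs.length_simple]; norm_num
    rw [hTi, if_neg hc]
  have hT1_s0 : Ti 1 (O (cs.simple 0)) = O (cs.simple 0 * cs.simple 1) := by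
    have hc : cs.length (cs.simple 0) < cs.length (cs.simple 0 * cs.simple 1) := by
      rw [cs.length_simple, hlen1]; norm_num
    rw [hTi, if_pos hc]
  have hT0_s1 : Ti 0 (O (cs.simple 1)) = O (cs.simple 1 * cs.simple 0) := by
    have hc : cs.length (cs.simple 1) < cs.length (cs.simple 1 * cs.simple 0) := by
      rw [cs.length_simple, hlen1']; norm_num
    rw [hTi, if_pos hc]
  have hT0_s0s1 : Ti 0 (O (cs.simple 0 * cs.simple 1))
      = O (cs.simple 0 * cs.simple 1 * cs.simple 0) := by
    have hc : cs.length (cs.simple 0 * cs.simple 1)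
        < cs.length (cs.simple 0 * cs.simple 1 * cs.simple 0) := by
      rw [hlen1, hlen3]; norm_num
    rw [hTi, if_pos hc]

  -- master commutation lemmas
  have Mzero : ∀ (i : Fin 2) (lam : P), wt.repr lam i = 0 →
      ∀ x : K, Xop lam (Ti i x) = Ti i (Xop lam x) := by
    intro i lam h x
    have hc : (AddMonoidAlgebra.single lam 1 : AddMonoidAlgebra ℤ P)
        - AddMonoidAlgebra.single (lam - wt.repr lam i • alpha i) 1
        = (1 - AddMonoidAlgebra.single (-(alpha i)) 1) * 0 := by
      rw [h, zero_smul, sub_zero, sub_self, mul_zero]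
    have h2 := hcross i lam 0 hc
    rw [h, zero_smul, sub_zero, AddMonoidAlgebra.coeff_zero, Finsupp.sum_zero_index, add_zero] at h2
    calc Xop lam (Ti i x) = (Xop lam * Ti i) x := rfl
      _ = (Ti i * Xop lam) x := by rw [h2]
      _ = Ti i (Xop lam x) := rfl
  have Mneg : ∀ (i : Fin 2) (lam : P), wt.repr lam i = -1 →
      ∀ x : K, Xop lam (Ti i x)
        = Ti i (Xop (lam + alpha i) x) - Xop (lam + alpha i) x := by
    intro i lam h x
    have e1 : lam - (-1 : ℤ) • alpha i = lam + alpha i := by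
      rw [neg_smul, one_smul, sub_neg_eq_add]
    have hc : (AddMonoidAlgebra.single lam 1 : AddMonoidAlgebra ℤ P)
        - AddMonoidAlgebra.single (lam - wt.repr lam i • alpha i) 1
        = (1 - AddMonoidAlgebra.single (-(alpha i)) 1)
            * AddMonoidAlgebra.single (lam + alpha i) (-1) := by
      rw [h, e1]
      exact SchubertA2Aux.amal_id lam (alpha i)
    have h2 := hcross i lam (AddMonoidAlgebra.single (lam + alpha i) (-1)) hc
    rw [h, e1] at h2
    rw [AddMonoidAlgebra.coeff_single, Finsupp.sum_single_index (by simp)] at h2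
    rw [neg_one_zsmul, ← sub_eq_add_neg] at h2
    calc Xop lam (Ti i x) = (Xop lam * Ti i) x := rfl
      _ = (Ti i * Xop (lam + alpha i) - Xop (lam + alpha i)) x := by rw [h2]
      _ = Ti i (Xop (lam + alpha i) x) - Xop (lam + alpha i) x := by
          rw [LinearMap.sub_apply]; rfl
  -- values of the X-operators on the basis elements we need
  have v1 : Xop (wt 1) (O (cs.simple 0))
      = (AddMonoidAlgebra.single (wt 1) 1 : AddMonoidAlgebra ℤ P) • O (cs.simple 0) := by
    calc Xop (wt 1) (O (cs.simple 0)) = Xop (wt 1) (Ti 0 (O 1)) := by rw [hT0_1]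
      _ = Ti 0 (Xop (wt 1) (O 1)) := Mzero 0 (wt 1) hr10 (O 1)
      _ = Ti 0 ((AddMonoidAlgebra.single (wt 1) 1 : AddMonoidAlgebra ℤ P) • O 1) := by
          rw [hXO1]
      _ = (AddMonoidAlgebra.single (wt 1) 1 : AddMonoidAlgebra ℤ P) • Ti 0 (O 1) :=
          map_smul _ _ _
      _ = (AddMonoidAlgebra.single (wt 1) 1 : AddMonoidAlgebra ℤ P) • O (cs.simple 0) := by
          rw [hT0_1]
  have v2 : Xop (wt 0 - wt 1) (O (cs.simple 0 * cs.simple 1))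
      = (AddMonoidAlgebra.single (wt 1) 1 : AddMonoidAlgebra ℤ P) • O (cs.simple 0 * cs.simple 1)
        - (AddMonoidAlgebra.single (wt 1) 1 : AddMonoidAlgebra ℤ P) • O (cs.simple 0) := by
    have h := Mneg 1 (wt 0 - wt 1) rA (O (cs.simple 0))
    rw [hT1_s0, p1] at h
    rw [h, v1, map_smul, hT1_s0]
  have v3 : Xop (-wt 0) (O (cs.simple 0 * cs.simple 1 * cs.simple 0))
      = (AddMonoidAlgebra.single (wt 1) 1 : AddMonoidAlgebra ℤ P)
          • O (cs.simple 0 * cs.simple 1 * cs.simple 0)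
        - (AddMonoidAlgebra.single (wt 1) 1 : AddMonoidAlgebra ℤ P)
          • O (cs.simple 0 * cs.simple 1) := by
    have h := Mneg 0 (-wt 0) rB (O (cs.simple 0 * cs.simple 1))
    rw [hT0_s0s1, p2] at h
    rw [h, v2, map_sub, map_smul, map_smul, hT0_s0s1, hT0_s0]
    abel
  have v5 : Xop (wt 1 - wt 0) (O (cs.simple 0))
      = (AddMonoidAlgebra.single (wt 0) 1 : AddMonoidAlgebra ℤ P) • O (cs.simple 0)
        - (AddMonoidAlgebra.single (wt 0) 1 : AddMonoidAlgebra ℤ P) • O 1 := by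
    have h := Mneg 0 (wt 1 - wt 0) rC (O 1)
    rw [hT0_1, p3] at h
    rw [h, hXO1, map_smul, hT0_1]
  have v6 : Xop (-wt 1) (O (cs.simple 0 * cs.simple 1))
      = (AddMonoidAlgebra.single (wt 0) 1 : AddMonoidAlgebra ℤ P) • O (cs.simple 0 * cs.simple 1)
        - (AddMonoidAlgebra.single (wt 0) 1 : AddMonoidAlgebra ℤ P) • O (cs.simple 1)
        - (AddMonoidAlgebra.single (wt 0) 1 : AddMonoidAlgebra ℤ P) • O (cs.simple 0)
        + (AddMonoidAlgebra.single (wt 0) 1 : AddMonoidAlgebra ℤ P) • O 1 := by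
    have h := Mneg 1 (-wt 1) rD (O (cs.simple 0))
    rw [hT1_s0, p4] at h
    rw [h, v5, map_sub, map_smul, map_smul, hT1_s0, hT1_1]
    abel
  have v7 : Xop (-wt 1) (O (cs.simple 0 * cs.simple 1 * cs.simple 0))
      = (AddMonoidAlgebra.single (wt 0) 1 : AddMonoidAlgebra ℤ P)
          • O (cs.simple 0 * cs.simple 1 * cs.simple 0)
        - (AddMonoidAlgebra.single (wt 0) 1 : AddMonoidAlgebra ℤ P)
          • O (cs.simple 1 * cs.simple 0) := by
    have h := Mzero 0 (-wt 1) rE (O (cs.simple 0 * cs.simple 1))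
    rw [hT0_s0s1] at h
    rw [h, v6, map_add, map_sub, map_sub, map_smul, map_smul, map_smul, map_smul,
      hT0_s0s1, hT0_s1, hT0_s0, hT0_1]
    abel
  have v8 : Xop (wt 0 - wt 1) (O (cs.simple 1))
      = (AddMonoidAlgebra.single (wt 1) 1 : AddMonoidAlgebra ℤ P) • O (cs.simple 1)
        - (AddMonoidAlgebra.single (wt 1) 1 : AddMonoidAlgebra ℤ P) • O 1 := by
    have h := Mneg 1 (wt 0 - wt 1) rA (O 1)
    rw [hT1_1, p1] at h
    rw [h, hXO1, map_smul, hT1_1]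
  have v9 : Xop (-wt 0) (O (cs.simple 1 * cs.simple 0))
      = (AddMonoidAlgebra.single (wt 1) 1 : AddMonoidAlgebra ℤ P) • O (cs.simple 1 * cs.simple 0)
        - (AddMonoidAlgebra.single (wt 1) 1 : AddMonoidAlgebra ℤ P) • O (cs.simple 0)
        - (AddMonoidAlgebra.single (wt 1) 1 : AddMonoidAlgebra ℤ P) • O (cs.simple 1)
        + (AddMonoidAlgebra.single (wt 1) 1 : AddMonoidAlgebra ℤ P) • O 1 := by
    have h := Mneg 0 (-wt 0) rB (O (cs.simple 1))
    rw [hT0_s1, p2] at h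
    rw [h, v8, map_sub, map_smul, map_smul, hT0_s1, hT0_1]
    abel
  have v10 : Xop (-wt 1) (O (cs.simple 1))
      = (AddMonoidAlgebra.single (wt 1 - wt 0) 1 : AddMonoidAlgebra ℤ P) • O (cs.simple 1)
        - (AddMonoidAlgebra.single (wt 1 - wt 0) 1 : AddMonoidAlgebra ℤ P) • O 1 := by
    have h := Mneg 1 (-wt 1) rD (O 1)
    rw [hT1_1, p4] at h
    rw [h, hXO1, map_smul, hT1_1]
  have v11 : Xop (-wt 1) (O (cs.simple 1 * cs.simple 0))
      = (AddMonoidAlgebra.single (wt 1 - wt 0) 1 : AddMonoidAlgebra ℤ P)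
          • O (cs.simple 1 * cs.simple 0)
        - (AddMonoidAlgebra.single (wt 1 - wt 0) 1 : AddMonoidAlgebra ℤ P)
          • O (cs.simple 0) := by
    have h := Mzero 0 (-wt 1) rE (O (cs.simple 1))
    rw [hT0_s1] at h
    rw [h, v10, map_sub, map_smul, map_smul, hT0_s1, hT0_1]

  -- representing O (s0 s1) and O (s1 s0) via operators applied to O w0
  have hF : O (cs.simple 0 * cs.simple 1)
      = O (cs.simple 0 * cs.simple 1 * cs.simple 0)
        + (-(AddMonoidAlgebra.single (-wt 1) 1 : AddMonoidAlgebra ℤ P))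
          • Xop (-wt 0) (O (cs.simple 0 * cs.simple 1 * cs.simple 0)) := by
    rw [v3, smul_sub, SchubertA2Aux.kill_smul, SchubertA2Aux.kill_smul]
    abel
  have hG : O (cs.simple 1 * cs.simple 0)
      = O (cs.simple 0 * cs.simple 1 * cs.simple 0)
        + (-(AddMonoidAlgebra.single (-wt 0) 1 : AddMonoidAlgebra ℤ P))
          • Xop (-wt 1) (O (cs.simple 0 * cs.simple 1 * cs.simple 0)) := by
    rw [v7, smul_sub, SchubertA2Aux.kill_smul, SchubertA2Aux.kill_smul]
    abel
  have hscal : ∀ z : K, (-(AddMonoidAlgebra.single (-wt 0) 1 : AddMonoidAlgebra ℤ P))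
      • ((AddMonoidAlgebra.single (wt 1 - wt 0) 1 : AddMonoidAlgebra ℤ P) • z)
      = -((AddMonoidAlgebra.single (-(alpha 0)) 1 : AddMonoidAlgebra ℤ P) • z) := by
    intro z
    rw [neg_smul, smul_smul, AddMonoidAlgebra.single_mul_single, one_mul, pneg]
  constructor
  · -- first product
    rw [hF, hmul_add, hmul_smul, hmul_X, hone, v9, smul_add, smul_sub, smul_sub,
      SchubertA2Aux.kill_smul, SchubertA2Aux.kill_smul, SchubertA2Aux.kill_smul,
      SchubertA2Aux.kill_smul]
    abel
  · -- second product
    nth_rewrite 1 [hG]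
    rw [hmul_add, hmul_smul, hmul_X, hone, v11, smul_sub, hscal, hscal,
      sub_smul, one_smul]
    abel
end
end
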